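/- arXiv:2210.17139 — 2 statements merged into one kernel-verified Lean document; each statement's English description precedes it below -/
import Mathlib

section
/- Cut-elimination: the rule (cut), inferring R, R', Γ, Γ' ⊢ u : B from R, Γ ⊢ w : A and R', Γ', w : A ⊢ u : B, is admissible in L_Σ(𝒜): if both premises are derivable in L_Σ(𝒜), then so is the conclusion. -/
namespace IGL

/-- An alphabet Σ: a nonempty countable type of characters partitioned into a
forward part and a backward part by an involutive converse operation. -/
structure Alphabet where
  Char : Type
  nonempty : Nonempty Char
  countable : Countable Char
  fwd : Char → Prop
  conv : Char → Char
  conv_conv : ∀ x, conv (conv x) = x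
  fwd_iff : ∀ x, fwd x ↔ ¬ fwd (conv x)

/-- Formulae of the intuitionistic multi-modal language `L_Σ`. -/
inductive Formula (C : Type) : Type
  | atom : ℕ → Formula C
  | bot  : Formula C
  | or   : Formula C → Formula C → Formula C
  | and  : Formula C → Formula C → Formula C
  | imp  : Formula C → Formula C → Formula C
  | dia  : C → Formula C → Formula C
  | box  : C → Formula C → Formula C

namespace Formula
/-- Intuitionistic negation `¬A := A ⊃ ⊥`. -/
def neg {C : Type} (A : Formula C) : Formula C := A.imp Formula.bot
/-- `A ≡ B := (A ⊃ B) ∧ (B ⊃ A)`. -/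
def equiv {C : Type} (A B : Formula C) : Formula C := (A.imp B).and (B.imp A)
end Formula

/-- Bi-relational Σ-models. -/
structure BiModel (α : Alphabet) where
  W : Type
  nonempty : Nonempty W
  le : W → W → Prop
  le_refl : ∀ w, le w w
  le_trans : ∀ w u v, le w u → le u v → le w v
  R : α.Char → W → W → Prop
  F1 : ∀ x w v v', R x w v → le v v' → ∃ w', le w w' ∧ R x w' v'
  F2 : ∀ x w w' v, le w w' → R x w v → ∃ v', R x w' v' ∧ le v v'
  F3 : ∀ x w u, R x w u ↔ R (α.conv x) u w
  V : W → ℕ → Prop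
  mono : ∀ w u, le w u → ∀ p, V w p → V u p

/-- Satisfaction `M,w ⊩ A`. -/
def Sat {α : Alphabet} (M : BiModel α) : M.W → Formula α.Char → Prop
  | w, Formula.atom p => M.V w p
  | _, Formula.bot => False
  | w, Formula.or A B => Sat M w A ∨ Sat M w B
  | w, Formula.and A B => Sat M w A ∧ Sat M w B
  | w, Formula.imp A B => ∀ w', M.le w w' → Sat M w' A → Sat M w' B
  | w, Formula.dia x A => ∃ v, M.R x w v ∧ Sat M v A
  | w, Formula.box x A => ∀ w' v', M.le w w' → M.R x w' v' → Sat M v' A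

/-- Axioms: seriality axioms `D_x` or intuitionistic path axioms
`(⟨x₁⟩⋯⟨xₙ⟩A ⊃ ⟨x⟩A) ∧ ([x]A ⊃ [x₁]⋯[xₙ]A)`, encoded by the character `x`
and the string `[x₁,…,xₙ]`. -/
inductive Ax (C : Type) : Type
  | ser : C → Ax C
  | ipa : C → List C → Ax C

/-- Composition of the accessibility relations along a string. -/
def BiModel.Rs {α : Alphabet} (M : BiModel α) : List α.Char → M.W → M.W → Prop
  | [], w, u => w = u
  | x :: s, w, u => ∃ v, M.R x w v ∧ M.Rs s v u

/-- The frame condition corresponding to an axiom. -/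
def SatisfiesAx {α : Alphabet} (M : BiModel α) : Ax α.Char → Prop
  | Ax.ser x => ∀ w, ∃ u, M.R x w u
  | Ax.ipa x s => ∀ w u, M.Rs s w u → M.R x w u

/-- A bi-relational (Σ,𝒜)-model. -/
def AModel {α : Alphabet} (𝒜 : Set (Ax α.Char)) (M : BiModel α) : Prop :=
  ∀ a ∈ 𝒜, SatisfiesAx M a

/-- `⟨x₁⟩⋯⟨xₙ⟩A`. -/
def dias {C : Type} : List C → Formula C → Formula C
  | [], A => A
  | x :: s, A => Formula.dia x (dias s A)

/-- `[x₁]⋯[xₙ]A`. -/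
def boxes {C : Type} : List C → Formula C → Formula C
  | [], A => A
  | x :: s, A => Formula.box x (boxes s A)

/-- The Hilbert system `H IK_m(Σ,𝒜)`. -/
inductive Hprf (α : Alphabet) (𝒜 : Set (Ax α.Char)) : Formula α.Char → Prop
  | ipl1 (A B : Formula α.Char) : Hprf α 𝒜 (A.imp (B.imp A))
  | ipl2 (A B C : Formula α.Char) : Hprf α 𝒜 ((A.imp (B.imp C)).imp ((A.imp B).imp (A.imp C)))
  | ipl3 (A B : Formula α.Char) : Hprf α 𝒜 (A.imp (A.or B))
  | ipl4 (A B : Formula α.Char) : Hprf α 𝒜 (B.imp (A.or B))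
  | ipl5 (A B C : Formula α.Char) : Hprf α 𝒜 ((A.imp C).imp ((B.imp C).imp ((A.or B).imp C)))
  | ipl6 (A B : Formula α.Char) : Hprf α 𝒜 ((A.and B).imp A)
  | ipl7 (A B : Formula α.Char) : Hprf α 𝒜 ((A.and B).imp B)
  | ipl8 (A B : Formula α.Char) : Hprf α 𝒜 (A.imp (B.imp (A.and B)))
  | ipl9 (A : Formula α.Char) : Hprf α 𝒜 (Formula.bot.imp A)
  | axK (x : α.Char) (A B : Formula α.Char) : Hprf α 𝒜 ((Formula.box x (A.imp B)).imp ((Formula.box x A).imp (Formula.box x B)))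
  | axBoxAnd (x : α.Char) (A B : Formula α.Char) : Hprf α 𝒜 ((Formula.box x (A.and B)).equiv ((Formula.box x A).and (Formula.box x B)))
  | axDiaOr (x : α.Char) (A B : Formula α.Char) : Hprf α 𝒜 ((Formula.dia x (A.or B)).equiv ((Formula.dia x A).or (Formula.dia x B)))
  | axKdia (x : α.Char) (A B : Formula α.Char) : Hprf α 𝒜 ((Formula.box x (A.imp B)).imp ((Formula.dia x A).imp (Formula.dia x B)))
  | axBoxDia (x : α.Char) (A B : Formula α.Char) : Hprf α 𝒜 (((Formula.box x A).and (Formula.dia x B)).imp (Formula.dia x (A.and B)))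
  | axNotDiaBot (x : α.Char) : Hprf α 𝒜 (Formula.dia x Formula.bot).neg
  | axConv (x : α.Char) (A : Formula α.Char) : Hprf α 𝒜 ((A.imp (Formula.box x (Formula.dia (α.conv x) A))).and
      ((Formula.dia x (Formula.box (α.conv x) A)).imp A))
  | axFS (x : α.Char) (A B : Formula α.Char) : Hprf α 𝒜 (((Formula.dia x A).imp (Formula.box x B)).imp (Formula.box x (A.imp B)))
  | axDiaImp (x : α.Char) (A B : Formula α.Char) : Hprf α 𝒜 ((Formula.dia x (A.imp B)).imp ((Formula.box x A).imp (Formula.dia x B)))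
  | axSer (x : α.Char) (A : Formula α.Char) (h : Ax.ser x ∈ 𝒜) : Hprf α 𝒜 ((Formula.box x A).imp (Formula.dia x A))
  | axIpa (x : α.Char) (s : List α.Char) (A : Formula α.Char) (h : Ax.ipa x s ∈ 𝒜) :
      Hprf α 𝒜 (((dias s A).imp (Formula.dia x A)).and ((Formula.box x A).imp (boxes s A)))
  | mp (A B : Formula α.Char) : Hprf α 𝒜 (A.imp B) → Hprf α 𝒜 A → Hprf α 𝒜 B
  | nec (x : α.Char) (A : Formula α.Char) : Hprf α 𝒜 A → Hprf α 𝒜 (Formula.box x A)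

/-- `B₁ ∧ ⋯ ∧ Bₙ` (left-nested). -/
def conjList {C : Type} : Formula C → List (Formula C) → Formula C
  | A, [] => A
  | A, B :: L => conjList (A.and B) L

/-- `𝒮 ⊢_𝒜 A`: either `A ∈ IK_m(Σ,𝒜)` or `B₁∧⋯∧Bₙ ⊃ A ∈ IK_m(Σ,𝒜)` for some
`B₁,…,Bₙ ∈ 𝒮`. -/
def HderivFrom (α : Alphabet) (𝒜 : Set (Ax α.Char)) (S : Set (Formula α.Char))
    (A : Formula α.Char) : Prop :=
  Hprf α 𝒜 A ∨ ∃ B L, B ∈ S ∧ (∀ D ∈ L, D ∈ S) ∧ Hprf α 𝒜 ((conjList B L).imp A)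

/-! ### Labeled sequents -/

/-- A relational atom `w R_x u`. -/
abbrev Rel (C : Type) := ℕ × C × ℕ
/-- A labeled formula `w : A`. -/
abbrev LF (C : Type) := ℕ × Formula C

def relLabels {C : Type} (R : Multiset (Rel C)) : Set ℕ :=
  {l | ∃ a ∈ R, a.1 = l ∨ a.2.2 = l}

def lfLabels {C : Type} (Γ : Multiset (LF C)) : Set ℕ :=
  {l | ∃ b ∈ Γ, b.1 = l}

/-- `u` is fresh with respect to the sequent `R, Γ ⊢ v : ⋯`. -/
def freshIn {C : Type} (u : ℕ) (R : Multiset (Rel C)) (Γ : Multiset (LF C)) (v : ℕ) : Prop :=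
  u ∉ relLabels R ∧ u ∉ lfLabels Γ ∧ u ≠ v

/-- `Chain s w u m`: the multiset `m` is a chain of relational atoms `w R_s u`
along the string `s` (with `w = u` and `m = 0` when `s = ε`). -/
inductive Chain {C : Type} : List C → ℕ → ℕ → Multiset (Rel C) → Prop
  | nil (w : ℕ) : Chain [] w w 0
  | cons {x : C} {s : List C} {w v u : ℕ} {m : Multiset (Rel C)} :
      Chain s v u m → Chain (x :: s) w u ((w, x, v) ::ₘ m)

/-- The labeled calculus `L_Σ(𝒜)`, height-indexed: `LD α 𝒜 n R Γ w A` states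
that the labeled sequent `R, Γ ⊢ w : A` has a proof of height at most `n`. -/
inductive LD (α : Alphabet) (𝒜 : Set (Ax α.Char)) :
    ℕ → Multiset (Rel α.Char) → Multiset (LF α.Char) → ℕ → Formula α.Char → Prop
  | id (n : ℕ) (R : Multiset (Rel α.Char)) (Γ : Multiset (LF α.Char)) (w p : ℕ) : LD α 𝒜 n R ((w, Formula.atom p) ::ₘ Γ) w (Formula.atom p)
  | botL (n : ℕ) (R : Multiset (Rel α.Char)) (Γ : Multiset (LF α.Char)) (w u : ℕ) (A : Formula α.Char) : LD α 𝒜 n R ((w, Formula.bot) ::ₘ Γ) u A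
  | orL {n : ℕ} {R : Multiset (Rel α.Char)} {Γ : Multiset (LF α.Char)} {w u : ℕ} {A B C : Formula α.Char} :
      LD α 𝒜 n R ((w, A) ::ₘ Γ) u C → LD α 𝒜 n R ((w, B) ::ₘ Γ) u C →
      LD α 𝒜 (n + 1) R ((w, A.or B) ::ₘ Γ) u C
  | orR1 {n : ℕ} {R : Multiset (Rel α.Char)} {Γ : Multiset (LF α.Char)} {w : ℕ} {A B : Formula α.Char} : LD α 𝒜 n R Γ w A → LD α 𝒜 (n + 1) R Γ w (A.or B)
  | orR2 {n : ℕ} {R : Multiset (Rel α.Char)} {Γ : Multiset (LF α.Char)} {w : ℕ} {A B : Formula α.Char} : LD α 𝒜 n R Γ w B → LD α 𝒜 (n + 1) R Γ w (A.or B)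
  | andL {n : ℕ} {R : Multiset (Rel α.Char)} {Γ : Multiset (LF α.Char)} {w u : ℕ} {A B C : Formula α.Char} :
      LD α 𝒜 n R ((w, A) ::ₘ (w, B) ::ₘ Γ) u C →
      LD α 𝒜 (n + 1) R ((w, A.and B) ::ₘ Γ) u C
  | andR {n : ℕ} {R : Multiset (Rel α.Char)} {Γ : Multiset (LF α.Char)} {w : ℕ} {A B : Formula α.Char} :
      LD α 𝒜 n R Γ w A → LD α 𝒜 n R Γ w B → LD α 𝒜 (n + 1) R Γ w (A.and B)
  | impL {n : ℕ} {R : Multiset (Rel α.Char)} {Γ : Multiset (LF α.Char)} {w u : ℕ} {A B C : Formula α.Char} :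
      LD α 𝒜 n R ((w, A.imp B) ::ₘ Γ) w A → LD α 𝒜 n R ((w, B) ::ₘ Γ) u C →
      LD α 𝒜 (n + 1) R ((w, A.imp B) ::ₘ Γ) u C
  | impR {n : ℕ} {R : Multiset (Rel α.Char)} {Γ : Multiset (LF α.Char)} {w : ℕ} {A B : Formula α.Char} :
      LD α 𝒜 n R ((w, A) ::ₘ Γ) w B → LD α 𝒜 (n + 1) R Γ w (A.imp B)
  | diaL {n : ℕ} {R : Multiset (Rel α.Char)} {Γ : Multiset (LF α.Char)} {w u v : ℕ} {x : α.Char} {A B : Formula α.Char} (hf : freshIn u R ((w, Formula.dia x A) ::ₘ Γ) v) :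
      LD α 𝒜 n ((w, x, u) ::ₘ R) ((u, A) ::ₘ Γ) v B →
      LD α 𝒜 (n + 1) R ((w, Formula.dia x A) ::ₘ Γ) v B
  | diaR {n : ℕ} {R : Multiset (Rel α.Char)} {Γ : Multiset (LF α.Char)} {w u : ℕ} {x : α.Char} {A : Formula α.Char} :
      LD α 𝒜 n ((w, x, u) ::ₘ R) Γ u A →
      LD α 𝒜 (n + 1) ((w, x, u) ::ₘ R) Γ w (Formula.dia x A)
  | boxR {n : ℕ} {R : Multiset (Rel α.Char)} {Γ : Multiset (LF α.Char)} {w u : ℕ} {x : α.Char} {A : Formula α.Char} (hf : freshIn u R Γ w) :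
      LD α 𝒜 n ((w, x, u) ::ₘ R) Γ u A → LD α 𝒜 (n + 1) R Γ w (Formula.box x A)
  | boxL {n : ℕ} {R : Multiset (Rel α.Char)} {Γ : Multiset (LF α.Char)} {w u v : ℕ} {x : α.Char} {A C : Formula α.Char} :
      LD α 𝒜 n ((w, x, u) ::ₘ R) ((w, Formula.box x A) ::ₘ (u, A) ::ₘ Γ) v C →
      LD α 𝒜 (n + 1) ((w, x, u) ::ₘ R) ((w, Formula.box x A) ::ₘ Γ) v C
  | dx {n : ℕ} {R : Multiset (Rel α.Char)} {Γ : Multiset (LF α.Char)} {u v : ℕ} {x : α.Char} {A : Formula α.Char} (w : ℕ) (hax : Ax.ser x ∈ 𝒜) (hf : freshIn u R Γ v) :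
      LD α 𝒜 n ((w, x, u) ::ₘ R) Γ v A → LD α 𝒜 (n + 1) R Γ v A
  | isx {n : ℕ} {R : Multiset (Rel α.Char)} {Γ : Multiset (LF α.Char)} {w u v : ℕ} {s : List α.Char} {x : α.Char} {m : Multiset (Rel α.Char)} {A : Formula α.Char} (hax : Ax.ipa x s ∈ 𝒜) (hc : Chain s w u m) :
      LD α 𝒜 n ((w, x, u) ::ₘ (m + R)) Γ v A → LD α 𝒜 (n + 1) (m + R) Γ v A
  | cx {n : ℕ} {R : Multiset (Rel α.Char)} {Γ : Multiset (LF α.Char)} {w u v : ℕ} {x : α.Char} {A : Formula α.Char} :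
      LD α 𝒜 n ((w, x, u) ::ₘ (u, α.conv x, w) ::ₘ R) Γ v A →
      LD α 𝒜 (n + 1) ((w, x, u) ::ₘ R) Γ v A

/-- Derivability in `L_Σ(𝒜)`. -/
def LDeriv (α : Alphabet) (𝒜 : Set (Ax α.Char)) (R : Multiset (Rel α.Char))
    (Γ : Multiset (LF α.Char)) (w : ℕ) (A : Formula α.Char) : Prop :=
  ∃ n, LD α 𝒜 n R Γ w A

/-- (Σ,𝒜)-validity of a labeled sequent. -/
def SeqValid (α : Alphabet) (𝒜 : Set (Ax α.Char)) (R : Multiset (Rel α.Char))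
    (Γ : Multiset (LF α.Char)) (w : ℕ) (A : Formula α.Char) : Prop :=
  ∀ (M : BiModel α), AModel 𝒜 M → ∀ I : ℕ → M.W,
    (∀ a ∈ R, M.R a.2.1 (I a.1) (I a.2.2)) → (∀ b ∈ Γ, Sat M (I b.1) b.2) →
      Sat M (I w) A

/-! ### Grammars and propagation -/

/-- Converse of a string: `s̄ = x̄ₙ⋯x̄₁` for `s = x₁⋯xₙ`. -/
def convStr {C : Type} (cv : C → C) (s : List C) : List C := (s.map cv).reverse

/-- The 𝒜-grammar `g(𝒜)`. -/
def Gram (α : Alphabet) (𝒜 : Set (Ax α.Char)) : Set (α.Char × List α.Char) :=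
  {p | Ax.ipa p.1 p.2 ∈ 𝒜 ∨
        ∃ x s, Ax.ipa x s ∈ 𝒜 ∧ p.1 = α.conv x ∧ p.2 = convStr α.conv s}

/-- One-step derivation between strings in a grammar. -/
def Step {C : Type} (g : Set (C × List C)) (s t : List C) : Prop :=
  ∃ s₁ s₂ x r, (x, r) ∈ g ∧ s = s₁ ++ x :: s₂ ∧ t = s₁ ++ r ++ s₂

/-- The language of the character `x` relative to a grammar. -/
def Lang {C : Type} (g : Set (C × List C)) (x : C) : Set (List C) :=
  {t | Relation.ReflTransGen (Step g) [x] t}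

/-- An edge of the propagation graph `PG(R)`. -/
def PGEdge (α : Alphabet) (R : Multiset (Rel α.Char)) (a : ℕ) (x : α.Char) (b : ℕ) : Prop :=
  (a, x, b) ∈ R ∨ (b, α.conv x, a) ∈ R

/-- `PPath α R w u s`: there is a propagation path from `w` to `u` in `PG(R)`
whose string is `s`. -/
inductive PPath (α : Alphabet) (R : Multiset (Rel α.Char)) : ℕ → ℕ → List α.Char → Prop
  | nil (w : ℕ) : PPath α R w w []
  | cons {w v u : ℕ} {x : α.Char} {s : List α.Char} :
      PGEdge α R w x v → PPath α R v u s → PPath α R w u (x :: s)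

/-- Side condition of the propagation rules: there exists a propagation path
`π(w,u)` in `PG(R)` with `s_π(w,u) ∈ L_{g(𝒜)}(x)`. -/
def CanProp (α : Alphabet) (𝒜 : Set (Ax α.Char)) (R : Multiset (Rel α.Char))
    (w u : ℕ) (x : α.Char) : Prop :=
  ∃ s, PPath α R w u s ∧ s ∈ Lang (Gram α 𝒜) x

/-- The refined labeled calculus `L*_Σ(𝒜)`, height-indexed. -/
inductive LDs (α : Alphabet) (𝒜 : Set (Ax α.Char)) :
    ℕ → Multiset (Rel α.Char) → Multiset (LF α.Char) → ℕ → Formula α.Char → Prop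
  | id (n : ℕ) (R : Multiset (Rel α.Char)) (Γ : Multiset (LF α.Char)) (w p : ℕ) : LDs α 𝒜 n R ((w, Formula.atom p) ::ₘ Γ) w (Formula.atom p)
  | botL (n : ℕ) (R : Multiset (Rel α.Char)) (Γ : Multiset (LF α.Char)) (w u : ℕ) (A : Formula α.Char) : LDs α 𝒜 n R ((w, Formula.bot) ::ₘ Γ) u A
  | orL {n : ℕ} {R : Multiset (Rel α.Char)} {Γ : Multiset (LF α.Char)} {w u : ℕ} {A B C : Formula α.Char} :
      LDs α 𝒜 n R ((w, A) ::ₘ Γ) u C → LDs α 𝒜 n R ((w, B) ::ₘ Γ) u C →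
      LDs α 𝒜 (n + 1) R ((w, A.or B) ::ₘ Γ) u C
  | orR1 {n : ℕ} {R : Multiset (Rel α.Char)} {Γ : Multiset (LF α.Char)} {w : ℕ} {A B : Formula α.Char} : LDs α 𝒜 n R Γ w A → LDs α 𝒜 (n + 1) R Γ w (A.or B)
  | orR2 {n : ℕ} {R : Multiset (Rel α.Char)} {Γ : Multiset (LF α.Char)} {w : ℕ} {A B : Formula α.Char} : LDs α 𝒜 n R Γ w B → LDs α 𝒜 (n + 1) R Γ w (A.or B)
  | andL {n : ℕ} {R : Multiset (Rel α.Char)} {Γ : Multiset (LF α.Char)} {w u : ℕ} {A B C : Formula α.Char} :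
      LDs α 𝒜 n R ((w, A) ::ₘ (w, B) ::ₘ Γ) u C →
      LDs α 𝒜 (n + 1) R ((w, A.and B) ::ₘ Γ) u C
  | andR {n : ℕ} {R : Multiset (Rel α.Char)} {Γ : Multiset (LF α.Char)} {w : ℕ} {A B : Formula α.Char} :
      LDs α 𝒜 n R Γ w A → LDs α 𝒜 n R Γ w B → LDs α 𝒜 (n + 1) R Γ w (A.and B)
  | impL {n : ℕ} {R : Multiset (Rel α.Char)} {Γ : Multiset (LF α.Char)} {w u : ℕ} {A B C : Formula α.Char} :
      LDs α 𝒜 n R ((w, A.imp B) ::ₘ Γ) w A → LDs α 𝒜 n R ((w, B) ::ₘ Γ) u C →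
      LDs α 𝒜 (n + 1) R ((w, A.imp B) ::ₘ Γ) u C
  | impR {n : ℕ} {R : Multiset (Rel α.Char)} {Γ : Multiset (LF α.Char)} {w : ℕ} {A B : Formula α.Char} :
      LDs α 𝒜 n R ((w, A) ::ₘ Γ) w B → LDs α 𝒜 (n + 1) R Γ w (A.imp B)
  | diaL {n : ℕ} {R : Multiset (Rel α.Char)} {Γ : Multiset (LF α.Char)} {w u v : ℕ} {x : α.Char} {A B : Formula α.Char} (hf : freshIn u R ((w, Formula.dia x A) ::ₘ Γ) v) :
      LDs α 𝒜 n ((w, x, u) ::ₘ R) ((u, A) ::ₘ Γ) v B →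
      LDs α 𝒜 (n + 1) R ((w, Formula.dia x A) ::ₘ Γ) v B
  | boxR {n : ℕ} {R : Multiset (Rel α.Char)} {Γ : Multiset (LF α.Char)} {w u : ℕ} {x : α.Char} {A : Formula α.Char} (hf : freshIn u R Γ w) :
      LDs α 𝒜 n ((w, x, u) ::ₘ R) Γ u A → LDs α 𝒜 (n + 1) R Γ w (Formula.box x A)
  | dx {n : ℕ} {R : Multiset (Rel α.Char)} {Γ : Multiset (LF α.Char)} {u v : ℕ} {x : α.Char} {A : Formula α.Char} (w : ℕ) (hax : Ax.ser x ∈ 𝒜) (hf : freshIn u R Γ v) :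
      LDs α 𝒜 n ((w, x, u) ::ₘ R) Γ v A → LDs α 𝒜 (n + 1) R Γ v A
  | pdia {n : ℕ} {R : Multiset (Rel α.Char)} {Γ : Multiset (LF α.Char)} {u : ℕ} {x : α.Char} {A : Formula α.Char} (w : ℕ) (h : CanProp α 𝒜 R w u x) :
      LDs α 𝒜 n R Γ u A → LDs α 𝒜 (n + 1) R Γ w (Formula.dia x A)
  | pbox {n : ℕ} {R : Multiset (Rel α.Char)} {Γ : Multiset (LF α.Char)} {w u v : ℕ} {x : α.Char} {A B : Formula α.Char} (h : CanProp α 𝒜 R w u x) :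
      LDs α 𝒜 n R ((w, Formula.box x A) ::ₘ (u, A) ::ₘ Γ) v B →
      LDs α 𝒜 (n + 1) R ((w, Formula.box x A) ::ₘ Γ) v B

/-- Derivability in `L*_Σ(𝒜)`. -/
def LDerivS (α : Alphabet) (𝒜 : Set (Ax α.Char)) (R : Multiset (Rel α.Char))
    (Γ : Multiset (LF α.Char)) (w : ℕ) (A : Formula α.Char) : Prop :=
  ∃ n, LDs α 𝒜 n R Γ w A

/-! ### Label substitutions -/

/-- `subL v u l`: replace the label `v` by `u`. -/
def subL (v u l : ℕ) : ℕ := if l = v then u else l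

def subR {C : Type} (v u : ℕ) (R : Multiset (Rel C)) : Multiset (Rel C) :=
  R.map (fun a => (subL v u a.1, a.2.1, subL v u a.2.2))

def subG {C : Type} (v u : ℕ) (Γ : Multiset (LF C)) : Multiset (LF C) :=
  Γ.map (fun b => (subL v u b.1, b.2))

/-! ### Double-negation translations -/

/-- The double-negation translation on `L_Σ`. -/
def dnt {C : Type} : Formula C → Formula C
  | Formula.atom p => ((Formula.atom p).neg).neg
  | Formula.bot => ((Formula.bot : Formula C).neg).neg
  | Formula.or A B => (((dnt A).neg).and ((dnt B).neg)).neg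
  | Formula.and A B => (dnt A).and (dnt B)
  | Formula.imp A B => (dnt A).imp (dnt B)
  | Formula.dia x A => (Formula.box x ((dnt A).neg)).neg
  | Formula.box x A => Formula.box x (dnt A)

/-! ### The classical language and calculi -/

/-- Formulae of the classical language `L^C_Σ` (negation normal form). -/
inductive CForm (C : Type) : Type
  | pos : ℕ → CForm C
  | neg : ℕ → CForm C
  | or  : CForm C → CForm C → CForm C
  | and : CForm C → CForm C → CForm C
  | dia : C → CForm C → CForm C
  | box : C → CForm C → CForm C

/-- Classical negation, recursively extended to all formulae of `L^C_Σ`. -/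
def cneg {C : Type} : CForm C → CForm C
  | CForm.pos p => CForm.neg p
  | CForm.neg p => CForm.pos p
  | CForm.or A B => CForm.and (cneg A) (cneg B)
  | CForm.and A B => CForm.or (cneg A) (cneg B)
  | CForm.dia x A => CForm.box x (cneg A)
  | CForm.box x A => CForm.dia x (cneg A)

/-- `⊥ := p ∧ ¬p` for a fixed propositional atom. -/
def cbot {C : Type} : CForm C := CForm.and (CForm.pos 0) (CForm.neg 0)

/-- `A ⊃ B := ¬A ∨ B`. -/
def cimp {C : Type} (A B : CForm C) : CForm C := CForm.or (cneg A) B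

/-- Reading a formula of `L_Σ` as a formula of `L^C_Σ`. -/
def toC {C : Type} : Formula C → CForm C
  | Formula.atom p => CForm.pos p
  | Formula.bot => cbot
  | Formula.or A B => CForm.or (toC A) (toC B)
  | Formula.and A B => CForm.and (toC A) (toC B)
  | Formula.imp A B => cimp (toC A) (toC B)
  | Formula.dia x A => CForm.dia x (toC A)
  | Formula.box x A => CForm.box x (toC A)

/-- A classical labeled formula. -/
abbrev CLF (C : Type) := ℕ × CForm C

def clfLabels {C : Type} (Γ : Multiset (CLF C)) : Set ℕ :=
  {l | ∃ b ∈ Γ, b.1 = l}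

/-- The refined labeled calculus `L^C_Σ(𝒜)` for the corresponding classical
grammar logic, operating on one-sided sequents `R ⊢ Γ`. -/
inductive CLD (α : Alphabet) (𝒜 : Set (Ax α.Char)) :
    Multiset (Rel α.Char) → Multiset (CLF α.Char) → Prop
  | id (R : Multiset (Rel α.Char)) (Γ : Multiset (CLF α.Char)) (w p : ℕ) :
      CLD α 𝒜 R ((w, CForm.pos p) ::ₘ (w, CForm.neg p) ::ₘ Γ)
  | orR {R : Multiset (Rel α.Char)} {Γ : Multiset (CLF α.Char)} {w : ℕ}
      {A B : CForm α.Char} :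
      CLD α 𝒜 R ((w, A) ::ₘ (w, B) ::ₘ Γ) → CLD α 𝒜 R ((w, CForm.or A B) ::ₘ Γ)
  | andR {R : Multiset (Rel α.Char)} {Γ : Multiset (CLF α.Char)} {w : ℕ}
      {A B : CForm α.Char} :
      CLD α 𝒜 R ((w, A) ::ₘ Γ) → CLD α 𝒜 R ((w, B) ::ₘ Γ) →
      CLD α 𝒜 R ((w, CForm.and A B) ::ₘ Γ)
  | boxR {R : Multiset (Rel α.Char)} {Γ : Multiset (CLF α.Char)} {w u : ℕ}
      {x : α.Char} {A : CForm α.Char}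
      (hf : u ∉ relLabels R ∧ u ∉ clfLabels ((w, CForm.box x A) ::ₘ Γ)) :
      CLD α 𝒜 ((w, x, u) ::ₘ R) ((u, A) ::ₘ Γ) →
      CLD α 𝒜 R ((w, CForm.box x A) ::ₘ Γ)
  | dx {R : Multiset (Rel α.Char)} {Γ : Multiset (CLF α.Char)} {u : ℕ}
      {x : α.Char} (w : ℕ) (hax : Ax.ser x ∈ 𝒜)
      (hf : u ∉ relLabels R ∧ u ∉ clfLabels Γ) :
      CLD α 𝒜 ((w, x, u) ::ₘ R) Γ → CLD α 𝒜 R Γ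
  | diaR {R : Multiset (Rel α.Char)} {Γ : Multiset (CLF α.Char)} {w u : ℕ}
      {x : α.Char} {A : CForm α.Char} (h : CanProp α 𝒜 R w u x) :
      CLD α 𝒜 R ((w, CForm.dia x A) ::ₘ (u, A) ::ₘ Γ) →
      CLD α 𝒜 R ((w, CForm.dia x A) ::ₘ Γ)

/-- `⟨x₁⟩⋯⟨xₙ⟩A` in the classical language. -/
def cdias {C : Type} : List C → CForm C → CForm C
  | [], A => A
  | x :: s, A => CForm.dia x (cdias s A)

/-- The Hilbert system for the classical grammar logic `K_m(Σ,𝒜')` corresponding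
to `IK_m(Σ,𝒜)`: seriality axioms of `𝒜` are kept and each intuitionistic path
axiom contributes the path axiom `⟨x₁⟩⋯⟨xₙ⟩A ⊃ ⟨x⟩A`. -/
inductive Kprf (α : Alphabet) (𝒜 : Set (Ax α.Char)) : CForm α.Char → Prop
  | cpl1 (A B : CForm α.Char) : Kprf α 𝒜 (cimp A (cimp B A))
  | cpl2 (A B C : CForm α.Char) :
      Kprf α 𝒜 (cimp (cimp A (cimp B C)) (cimp (cimp A B) (cimp A C)))
  | cpl3 (A B : CForm α.Char) : Kprf α 𝒜 (cimp A (CForm.or A B))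
  | cpl4 (A B : CForm α.Char) : Kprf α 𝒜 (cimp B (CForm.or A B))
  | cpl5 (A B C : CForm α.Char) :
      Kprf α 𝒜 (cimp (cimp A C) (cimp (cimp B C) (cimp (CForm.or A B) C)))
  | cpl6 (A B : CForm α.Char) : Kprf α 𝒜 (cimp (CForm.and A B) A)
  | cpl7 (A B : CForm α.Char) : Kprf α 𝒜 (cimp (CForm.and A B) B)
  | cpl8 (A B : CForm α.Char) : Kprf α 𝒜 (cimp A (cimp B (CForm.and A B)))
  | cpl9 (A : CForm α.Char) : Kprf α 𝒜 (cimp cbot A)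
  | cpl10 (A : CForm α.Char) : Kprf α 𝒜 (CForm.or A (cneg A))
  | axK (x : α.Char) (A B : CForm α.Char) :
      Kprf α 𝒜 (cimp (CForm.box x (cimp A B)) (cimp (CForm.box x A) (CForm.box x B)))
  | axConv (x : α.Char) (A : CForm α.Char) :
      Kprf α 𝒜 (cimp A (CForm.box x (CForm.dia (α.conv x) A)))
  | axSer (x : α.Char) (A : CForm α.Char) (h : Ax.ser x ∈ 𝒜) :
      Kprf α 𝒜 (cimp (CForm.box x A) (CForm.dia x A))
  | axPath (x : α.Char) (s : List α.Char) (A : CForm α.Char) (h : Ax.ipa x s ∈ 𝒜) :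
      Kprf α 𝒜 (cimp (cdias s A) (CForm.dia x A))
  | mp (A B : CForm α.Char) : Kprf α 𝒜 (cimp A B) → Kprf α 𝒜 A → Kprf α 𝒜 B
  | nec (x : α.Char) (A : CForm α.Char) : Kprf α 𝒜 A → Kprf α 𝒜 (CForm.box x A)

/-- The double-negation translation from `L^C_Σ` into `L_Σ`. -/
def dntC {C : Type} : CForm C → Formula C
  | CForm.pos p => ((Formula.atom p).neg).neg
  | CForm.neg p => (((Formula.atom p).neg).neg).neg
  | CForm.or A B => (((dntC A).neg).and ((dntC B).neg)).neg
  | CForm.and A B => (dntC A).and (dntC B)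
  | CForm.dia x A => (Formula.box x ((dntC A).neg)).neg
  | CForm.box x A => Formula.box x (dntC A)

/-! ### Labeled tree sequents and derivation trees -/

/-- Reachability along the relational atoms of `R`. -/
def Reach {C : Type} (R : Multiset (Rel C)) (a b : ℕ) : Prop :=
  Relation.ReflTransGen (fun p q => ∃ x, (p, x, q) ∈ R) a b

/-- `R, Γ ⊢ w : ⋯` is a labeled tree sequent with root `r`. -/
def isTreeSeqRoot (α : Alphabet) (R : Multiset (Rel α.Char))
    (Γ : Multiset (LF α.Char)) (w r : ℕ) : Prop :=
  (R = 0 → r = w ∧ ∀ b ∈ Γ, b.1 = w) ∧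
  (R ≠ 0 →
    (∀ a ∈ R, a.2.2 ≠ r) ∧
    (∀ l : ℕ, l ≠ r → (R.filter (fun a => a.2.2 = l)).card ≤ 1) ∧
    (∀ l ∈ relLabels R, Reach R r l) ∧
    (∀ b ∈ Γ, b.1 ∈ relLabels R) ∧ w ∈ relLabels R)

/-- Proof trees (derivations) in the refined labeled calculus `L*_Σ(𝒜)`. -/
inductive DTree (α : Alphabet) (𝒜 : Set (Ax α.Char)) :
    Multiset (Rel α.Char) → Multiset (LF α.Char) → ℕ → Formula α.Char → Type
  | id (R : Multiset (Rel α.Char)) (Γ : Multiset (LF α.Char)) (w p : ℕ) :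
      DTree α 𝒜 R ((w, Formula.atom p) ::ₘ Γ) w (Formula.atom p)
  | botL (R : Multiset (Rel α.Char)) (Γ : Multiset (LF α.Char)) (w u : ℕ)
      (A : Formula α.Char) : DTree α 𝒜 R ((w, Formula.bot) ::ₘ Γ) u A
  | orL (R : Multiset (Rel α.Char)) (Γ : Multiset (LF α.Char)) (w u : ℕ)
      (A B C : Formula α.Char) :
      DTree α 𝒜 R ((w, A) ::ₘ Γ) u C → DTree α 𝒜 R ((w, B) ::ₘ Γ) u C →
      DTree α 𝒜 R ((w, A.or B) ::ₘ Γ) u C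
  | orR1 (R : Multiset (Rel α.Char)) (Γ : Multiset (LF α.Char)) (w : ℕ)
      (A B : Formula α.Char) : DTree α 𝒜 R Γ w A → DTree α 𝒜 R Γ w (A.or B)
  | orR2 (R : Multiset (Rel α.Char)) (Γ : Multiset (LF α.Char)) (w : ℕ)
      (A B : Formula α.Char) : DTree α 𝒜 R Γ w B → DTree α 𝒜 R Γ w (A.or B)
  | andL (R : Multiset (Rel α.Char)) (Γ : Multiset (LF α.Char)) (w u : ℕ)
      (A B C : Formula α.Char) :
      DTree α 𝒜 R ((w, A) ::ₘ (w, B) ::ₘ Γ) u C →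
      DTree α 𝒜 R ((w, A.and B) ::ₘ Γ) u C
  | andR (R : Multiset (Rel α.Char)) (Γ : Multiset (LF α.Char)) (w : ℕ)
      (A B : Formula α.Char) :
      DTree α 𝒜 R Γ w A → DTree α 𝒜 R Γ w B → DTree α 𝒜 R Γ w (A.and B)
  | impL (R : Multiset (Rel α.Char)) (Γ : Multiset (LF α.Char)) (w u : ℕ)
      (A B C : Formula α.Char) :
      DTree α 𝒜 R ((w, A.imp B) ::ₘ Γ) w A → DTree α 𝒜 R ((w, B) ::ₘ Γ) u C →
      DTree α 𝒜 R ((w, A.imp B) ::ₘ Γ) u C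
  | impR (R : Multiset (Rel α.Char)) (Γ : Multiset (LF α.Char)) (w : ℕ)
      (A B : Formula α.Char) :
      DTree α 𝒜 R ((w, A) ::ₘ Γ) w B → DTree α 𝒜 R Γ w (A.imp B)
  | diaL (R : Multiset (Rel α.Char)) (Γ : Multiset (LF α.Char)) (w u v : ℕ)
      (x : α.Char) (A B : Formula α.Char)
      (hf : freshIn u R ((w, Formula.dia x A) ::ₘ Γ) v) :
      DTree α 𝒜 ((w, x, u) ::ₘ R) ((u, A) ::ₘ Γ) v B →
      DTree α 𝒜 R ((w, Formula.dia x A) ::ₘ Γ) v B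
  | boxR (R : Multiset (Rel α.Char)) (Γ : Multiset (LF α.Char)) (w u : ℕ)
      (x : α.Char) (A : Formula α.Char) (hf : freshIn u R Γ w) :
      DTree α 𝒜 ((w, x, u) ::ₘ R) Γ u A → DTree α 𝒜 R Γ w (Formula.box x A)
  | dx (R : Multiset (Rel α.Char)) (Γ : Multiset (LF α.Char)) (w u v : ℕ)
      (x : α.Char) (A : Formula α.Char) (hax : Ax.ser x ∈ 𝒜)
      (hf : freshIn u R Γ v) :
      DTree α 𝒜 ((w, x, u) ::ₘ R) Γ v A → DTree α 𝒜 R Γ v A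
  | pdia (R : Multiset (Rel α.Char)) (Γ : Multiset (LF α.Char)) (w u : ℕ)
      (x : α.Char) (A : Formula α.Char) (h : CanProp α 𝒜 R w u x) :
      DTree α 𝒜 R Γ u A → DTree α 𝒜 R Γ w (Formula.dia x A)
  | pbox (R : Multiset (Rel α.Char)) (Γ : Multiset (LF α.Char)) (w u v : ℕ)
      (x : α.Char) (A B : Formula α.Char) (h : CanProp α 𝒜 R w u x) :
      DTree α 𝒜 R ((w, Formula.box x A) ::ₘ (u, A) ::ₘ Γ) v B →
      DTree α 𝒜 R ((w, Formula.box x A) ::ₘ Γ) v B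

/-- `EverySeq P d`: every labeled sequent occurring in the derivation `d`
satisfies `P`. -/
def EverySeq {α : Alphabet} {𝒜 : Set (Ax α.Char)}
    (P : Multiset (Rel α.Char) → Multiset (LF α.Char) → ℕ → Formula α.Char → Prop) :
    ∀ {R : Multiset (Rel α.Char)} {Γ : Multiset (LF α.Char)} {w : ℕ}
      {A : Formula α.Char}, DTree α 𝒜 R Γ w A → Prop
  | _, _, _, _, DTree.id R Γ w p => P R ((w, Formula.atom p) ::ₘ Γ) w (Formula.atom p)
  | _, _, _, _, DTree.botL R Γ w u A => P R ((w, Formula.bot) ::ₘ Γ) u A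
  | _, _, _, _, DTree.orL R Γ w u A B C d1 d2 =>
      P R ((w, A.or B) ::ₘ Γ) u C ∧ EverySeq P d1 ∧ EverySeq P d2
  | _, _, _, _, DTree.orR1 R Γ w A B d => P R Γ w (A.or B) ∧ EverySeq P d
  | _, _, _, _, DTree.orR2 R Γ w A B d => P R Γ w (A.or B) ∧ EverySeq P d
  | _, _, _, _, DTree.andL R Γ w u A B C d =>
      P R ((w, A.and B) ::ₘ Γ) u C ∧ EverySeq P d
  | _, _, _, _, DTree.andR R Γ w A B d1 d2 =>
      P R Γ w (A.and B) ∧ EverySeq P d1 ∧ EverySeq P d2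
  | _, _, _, _, DTree.impL R Γ w u A B C d1 d2 =>
      P R ((w, A.imp B) ::ₘ Γ) u C ∧ EverySeq P d1 ∧ EverySeq P d2
  | _, _, _, _, DTree.impR R Γ w A B d => P R Γ w (A.imp B) ∧ EverySeq P d
  | _, _, _, _, DTree.diaL R Γ w u v x A B _ d =>
      P R ((w, Formula.dia x A) ::ₘ Γ) v B ∧ EverySeq P d
  | _, _, _, _, DTree.boxR R Γ w u x A _ d =>
      P R Γ w (Formula.box x A) ∧ EverySeq P d
  | _, _, _, _, DTree.dx R Γ w u v x A _ _ d => P R Γ v A ∧ EverySeq P d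
  | _, _, _, _, DTree.pdia R Γ w u x A _ d =>
      P R Γ w (Formula.dia x A) ∧ EverySeq P d
  | _, _, _, _, DTree.pbox R Γ w u v x A B _ d =>
      P R ((w, Formula.box x A) ::ₘ Γ) v B ∧ EverySeq P d


/-! ### Auxiliary machinery for cut elimination -/

section CutElim

variable {α : Alphabet} {𝒜 : Set (Ax α.Char)}

/-- Size of a formula. -/
def Formula.size {C : Type} : Formula C → ℕ
  | .atom _ => 1
  | .bot => 1
  | .or A B => A.size + B.size + 1
  | .and A B => A.size + B.size + 1
  | .imp A B => A.size + B.size + 1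
  | .dia _ A => A.size + 1
  | .box _ A => A.size + 1

lemma cons_eq_cons' {β : Type} {a b : β} {s t : Multiset β} (h : a ::ₘ s = b ::ₘ t) :
    (a = b ∧ s = t) ∨ ∃ u, s = b ::ₘ u ∧ t = a ::ₘ u := by
  rcases Multiset.cons_eq_cons.1 h with ⟨h1, h2⟩ | ⟨_, u, h1, h2⟩
  · exact Or.inl ⟨h1, h2⟩
  · exact Or.inr ⟨u, h1, h2⟩

@[simp] lemma mem_relLabels_cons {C : Type} {w u l : ℕ} {x : C} {R : Multiset (Rel C)} :
    l ∈ relLabels ((w, x, u) ::ₘ R) ↔ l = w ∨ l = u ∨ l ∈ relLabels R := by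
  simp only [relLabels, Set.mem_setOf_eq, Multiset.mem_cons]
  constructor
  · rintro ⟨a, (rfl | ha), h⟩
    · rcases h with h | h
      · exact Or.inl h.symm
      · exact Or.inr (Or.inl h.symm)
    · exact Or.inr (Or.inr ⟨a, ha, h⟩)
  · rintro (rfl | rfl | ⟨a, ha, h⟩)
    · exact ⟨_, Or.inl rfl, Or.inl rfl⟩
    · exact ⟨_, Or.inl rfl, Or.inr rfl⟩
    · exact ⟨a, Or.inr ha, h⟩

@[simp] lemma mem_relLabels_add {C : Type} {l : ℕ} {R S : Multiset (Rel C)} :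
    l ∈ relLabels (R + S) ↔ l ∈ relLabels R ∨ l ∈ relLabels S := by
  simp only [relLabels, Set.mem_setOf_eq, Multiset.mem_add]
  constructor
  · rintro ⟨a, (ha | ha), h⟩
    · exact Or.inl ⟨a, ha, h⟩
    · exact Or.inr ⟨a, ha, h⟩
  · rintro (⟨a, ha, h⟩ | ⟨a, ha, h⟩)
    · exact ⟨a, Or.inl ha, h⟩
    · exact ⟨a, Or.inr ha, h⟩

@[simp] lemma mem_relLabels_zero {C : Type} {l : ℕ} :
    l ∈ relLabels (0 : Multiset (Rel C)) ↔ False := by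
  simp [relLabels]

@[simp] lemma mem_lfLabels_cons {C : Type} {w l : ℕ} {A : Formula C} {Γ : Multiset (LF C)} :
    l ∈ lfLabels ((w, A) ::ₘ Γ) ↔ l = w ∨ l ∈ lfLabels Γ := by
  simp only [lfLabels, Set.mem_setOf_eq, Multiset.mem_cons]
  constructor
  · rintro ⟨b, (rfl | hb), h⟩
    · exact Or.inl h.symm
    · exact Or.inr ⟨b, hb, h⟩
  · rintro (rfl | ⟨b, hb, h⟩)
    · exact ⟨_, Or.inl rfl, rfl⟩
    · exact ⟨b, Or.inr hb, h⟩

@[simp] lemma mem_lfLabels_add {C : Type} {l : ℕ} {Γ Δ : Multiset (LF C)} :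
    l ∈ lfLabels (Γ + Δ) ↔ l ∈ lfLabels Γ ∨ l ∈ lfLabels Δ := by
  simp only [lfLabels, Set.mem_setOf_eq, Multiset.mem_add]
  constructor
  · rintro ⟨b, (hb | hb), h⟩
    · exact Or.inl ⟨b, hb, h⟩
    · exact Or.inr ⟨b, hb, h⟩
  · rintro (⟨b, hb, h⟩ | ⟨b, hb, h⟩)
    · exact ⟨b, Or.inl hb, h⟩
    · exact ⟨b, Or.inr hb, h⟩

@[simp] lemma mem_lfLabels_zero {C : Type} {l : ℕ} :
    l ∈ lfLabels (0 : Multiset (LF C)) ↔ False := by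
  simp [lfLabels]

lemma le_fold_max {m : Multiset ℕ} {x : ℕ} (h : x ∈ m) : x ≤ m.fold max 0 := by
  induction m using Multiset.induction with
  | empty => simp at h
  | cons a s ih =>
    rw [Multiset.fold_cons_left]
    rcases Multiset.mem_cons.1 h with rfl | h
    · exact le_max_left _ _
    · exact le_trans (ih h) (le_max_right _ _)

/-- Existence of fresh labels. -/
lemma exists_fresh {C : Type} (R1 R2 : Multiset (Rel C)) (Γ1 Γ2 : Multiset (LF C))
    (L : List ℕ) :
    ∃ t : ℕ, t ∉ relLabels R1 ∧ t ∉ relLabels R2 ∧ t ∉ lfLabels Γ1 ∧ t ∉ lfLabels Γ2 ∧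
      ∀ x ∈ L, t ≠ x := by
  classical
  set m : Multiset ℕ :=
    ((R1 + R2).map fun a => max a.1 a.2.2) + ((Γ1 + Γ2).map Prod.fst) + (↑L : Multiset ℕ) with hm
  have key : ∀ a : Rel C, a ∈ R1 + R2 → max a.1 a.2.2 ≤ m.fold max 0 := by
    intro a ha
    apply le_fold_max
    simp only [hm, Multiset.mem_add, Multiset.mem_map]
    exact Or.inl (Or.inl ⟨a, Multiset.mem_add.1 ha, rfl⟩)
  have keyG : ∀ b : LF C, b ∈ Γ1 + Γ2 → b.1 ≤ m.fold max 0 := by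
    intro b hb
    apply le_fold_max
    simp only [hm, Multiset.mem_add, Multiset.mem_map]
    exact Or.inl (Or.inr ⟨b, Multiset.mem_add.1 hb, rfl⟩)
  refine ⟨m.fold max 0 + 1, ?_, ?_, ?_, ?_, ?_⟩
  · rintro ⟨a, ha, h⟩
    have := key a (Multiset.mem_add.2 (Or.inl ha))
    rcases h with h | h <;> omega
  · rintro ⟨a, ha, h⟩
    have := key a (Multiset.mem_add.2 (Or.inr ha))
    rcases h with h | h <;> omega
  · rintro ⟨b, hb, h⟩
    have := keyG b (Multiset.mem_add.2 (Or.inl hb))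
    omega
  · rintro ⟨b, hb, h⟩
    have := keyG b (Multiset.mem_add.2 (Or.inr hb))
    omega
  · intro x hx
    have : x ≤ m.fold max 0 := le_fold_max (by simp [hm, hx])
    omega

@[simp] lemma subL_self {a b : ℕ} : subL a b a = b := by simp [subL]

lemma subL_ne {a b l : ℕ} (h : l ≠ a) : subL a b l = l := by simp [subL, h]

@[simp] lemma subR_cons {C : Type} {a b w u : ℕ} {x : C} {R : Multiset (Rel C)} :
    subR a b ((w, x, u) ::ₘ R) = (subL a b w, x, subL a b u) ::ₘ subR a b R := by
  simp [subR]

@[simp] lemma subG_cons {C : Type} {a b w : ℕ} {A : Formula C} {Γ : Multiset (LF C)} :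
    subG a b ((w, A) ::ₘ Γ) = (subL a b w, A) ::ₘ subG a b Γ := by
  simp [subG]

@[simp] lemma subR_add {C : Type} {a b : ℕ} {R S : Multiset (Rel C)} :
    subR a b (R + S) = subR a b R + subR a b S := by simp [subR]

@[simp] lemma subG_add {C : Type} {a b : ℕ} {Γ Δ : Multiset (LF C)} :
    subG a b (Γ + Δ) = subG a b Γ + subG a b Δ := by simp [subG]

@[simp] lemma subR_zero {C : Type} {a b : ℕ} : subR a b (0 : Multiset (Rel C)) = 0 := rfl

@[simp] lemma subG_zero {C : Type} {a b : ℕ} : subG a b (0 : Multiset (LF C)) = 0 := rfl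

lemma subR_id {C : Type} {a b : ℕ} {R : Multiset (Rel C)} (h : a ∉ relLabels R) :
    subR a b R = R := by
  have : ∀ p ∈ R, (fun q : Rel C => (subL a b q.1, q.2.1, subL a b q.2.2)) p = p := by
    rintro ⟨w, x, u⟩ hp
    have hw : w ≠ a := fun hwa => h ⟨_, hp, Or.inl hwa⟩
    have hu : u ≠ a := fun hua => h ⟨_, hp, Or.inr hua⟩
    simp [subL_ne hw, subL_ne hu]
  simp only [subR]
  rw [Multiset.map_congr rfl this, Multiset.map_id']

lemma subG_id {C : Type} {a b : ℕ} {Γ : Multiset (LF C)} (h : a ∉ lfLabels Γ) :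
    subG a b Γ = Γ := by
  have : ∀ p ∈ Γ, (fun q : LF C => (subL a b q.1, q.2)) p = p := by
    rintro ⟨w, A⟩ hp
    have hw : w ≠ a := fun hwa => h ⟨_, hp, hwa⟩
    simp [subL_ne hw]
  simp only [subG]
  rw [Multiset.map_congr rfl this, Multiset.map_id']

lemma not_mem_relLabels_subR {C : Type} {a b t : ℕ} {R : Multiset (Rel C)}
    (h1 : t ∉ relLabels R) (h2 : t ≠ b) : t ∉ relLabels (subR a b R) := by
  rintro ⟨p, hp, hh⟩
  simp only [subR, Multiset.mem_map] at hp
  obtain ⟨⟨w, x, u⟩, hq, rfl⟩ := hp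
  have hw : w ≠ t := fun e => h1 ⟨_, hq, Or.inl e⟩
  have hu : u ≠ t := fun e => h1 ⟨_, hq, Or.inr e⟩
  rcases hh with hh | hh <;> simp only [subL] at hh <;> split at hh <;> omega

lemma not_mem_lfLabels_subG {C : Type} {a b t : ℕ} {Γ : Multiset (LF C)}
    (h1 : t ∉ lfLabels Γ) (h2 : t ≠ b) : t ∉ lfLabels (subG a b Γ) := by
  rintro ⟨p, hp, hh⟩
  simp only [subG, Multiset.mem_map] at hp
  obtain ⟨⟨w, A⟩, hq, rfl⟩ := hp
  have hw : w ≠ t := fun e => h1 ⟨_, hq, e⟩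
  simp only [subL] at hh; split at hh <;> omega

lemma Chain.sub {s : List α.Char} {w u a b : ℕ} {m : Multiset (Rel α.Char)}
    (h : Chain s w u m) : Chain s (subL a b w) (subL a b u) (subR a b m) := by
  induction h with
  | nil w => exact Chain.nil _
  | cons h ih => rw [subR_cons]; exact Chain.cons ih

lemma Chain.mem_labels {x : α.Char} {s : List α.Char} {w u : ℕ} {m : Multiset (Rel α.Char)}
    (h : Chain (x :: s) w u m) : w ∈ relLabels m ∧ u ∈ relLabels m := by
  revert x w m
  induction s with
  | nil =>
    intro x w m h
    cases h with
    | cons h' =>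
      cases h' with
      | nil =>
        constructor <;>
          [exact ⟨_, Multiset.mem_singleton_self _, Or.inl rfl⟩;
           exact ⟨_, Multiset.mem_singleton_self _, Or.inr rfl⟩]
  | cons y s ih =>
    intro x w m h
    cases h with
    | cons h' =>
      refine ⟨by simp, ?_⟩
      rcases ih h' with ⟨-, h2⟩
      simp [h2]

/-- Height monotonicity. -/
lemma LD.succ {n : ℕ} {R : Multiset (Rel α.Char)} {Γ : Multiset (LF α.Char)} {w : ℕ}
    {A : Formula α.Char} (h : LD α 𝒜 n R Γ w A) : LD α 𝒜 (n + 1) R Γ w A := by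
  induction h with
  | id => exact LD.id _ _ _ _ _
  | botL => exact LD.botL _ _ _ _ _ _
  | orL _ _ ih1 ih2 => exact LD.orL ih1 ih2
  | orR1 _ ih => exact LD.orR1 ih
  | orR2 _ ih => exact LD.orR2 ih
  | andL _ ih => exact LD.andL ih
  | andR _ _ ih1 ih2 => exact LD.andR ih1 ih2
  | impL _ _ ih1 ih2 => exact LD.impL ih1 ih2
  | impR _ ih => exact LD.impR ih
  | diaL hf _ ih => exact LD.diaL hf ih
  | diaR _ ih => exact LD.diaR ih
  | boxR hf _ ih => exact LD.boxR hf ih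
  | boxL _ ih => exact LD.boxL ih
  | dx w hax hf _ ih => exact LD.dx w hax hf ih
  | isx hax hc _ ih => exact LD.isx hax hc ih
  | cx _ ih => exact LD.cx ih

lemma LD.mono {n m : ℕ} {R : Multiset (Rel α.Char)} {Γ : Multiset (LF α.Char)} {w : ℕ}
    {A : Formula α.Char} (hnm : n ≤ m) (h : LD α 𝒜 n R Γ w A) : LD α 𝒜 m R Γ w A := by
  induction hnm with
  | refl => exact h
  | step _ ih => exact ih.succ


lemma freshIn_cons_destruct {u w v : ℕ} {A : Formula α.Char} {R : Multiset (Rel α.Char)}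
    {Γ : Multiset (LF α.Char)} (hf : freshIn u R ((w, A) ::ₘ Γ) v) :
    u ∉ relLabels R ∧ u ≠ w ∧ u ∉ lfLabels Γ ∧ u ≠ v := by
  obtain ⟨h1, h2, h3⟩ := hf
  simp only [mem_lfLabels_cons, not_or] at h2
  exact ⟨h1, h2.1, h2.2, h3⟩

/-- Height-preserving substitution. -/
lemma LD.sub : ∀ n {R : Multiset (Rel α.Char)} {Γ : Multiset (LF α.Char)} {v : ℕ}
    {C : Formula α.Char} (a b : ℕ), LD α 𝒜 n R Γ v C →
    LD α 𝒜 n (subR a b R) (subG a b Γ) (subL a b v) C := by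
  intro n
  induction n using Nat.strong_induction_on with
  | _ n IH =>
  intro R Γ v C a b h
  cases h with
  | id n R Γ w p =>
    rw [subG_cons]; exact LD.id _ _ _ _ _
  | botL n R Γ w u A =>
    rw [subG_cons]; exact LD.botL _ _ _ _ _ _
  | orL h1 h2 =>
    simp only [subG_cons]
    exact LD.orL (by simpa using IH _ (Nat.lt_succ_self _) a b h1)
      (by simpa using IH _ (Nat.lt_succ_self _) a b h2)
  | orR1 h => exact LD.orR1 (IH _ (Nat.lt_succ_self _) a b h)
  | orR2 h => exact LD.orR2 (IH _ (Nat.lt_succ_self _) a b h)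
  | andL h =>
    simp only [subG_cons]
    exact LD.andL (by simpa using IH _ (Nat.lt_succ_self _) a b h)
  | andR h1 h2 =>
    exact LD.andR (IH _ (Nat.lt_succ_self _) a b h1) (IH _ (Nat.lt_succ_self _) a b h2)
  | impL h1 h2 =>
    simp only [subG_cons]
    exact LD.impL (by simpa using IH _ (Nat.lt_succ_self _) a b h1)
      (by simpa using IH _ (Nat.lt_succ_self _) a b h2)
  | impR h =>
    exact LD.impR (by simpa using IH _ (Nat.lt_succ_self _) a b h)
  | @diaL n' R Γ w u v x A B hf h =>
    obtain ⟨huR, huw, huG, huv⟩ := freshIn_cons_destruct hf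
    obtain ⟨t, ht1, ht2, ht3, ht4, ht5⟩ :=
      exists_fresh R (subR a b R) Γ (subG a b Γ) [w, subL a b w, v, subL a b v, a, b]
    have h1 := IH _ (Nat.lt_succ_self _) u t h
    rw [subR_cons, subG_cons, subR_id huR, subG_id huG, subL_self,
      subL_ne (Ne.symm huw), subL_ne (Ne.symm huv)] at h1
    have h2 := IH _ (Nat.lt_succ_self _) a b h1
    rw [subR_cons, subG_cons, subL_ne (ht5 a (by simp))] at h2
    simp only [subG_cons]
    refine LD.diaL ⟨?_, ?_, ?_⟩ h2
    · exact not_mem_relLabels_subR ht1 (ht5 b (by simp))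
    · simp only [mem_lfLabels_cons, not_or]
      exact ⟨ht5 _ (by simp), not_mem_lfLabels_subG ht3 (ht5 b (by simp))⟩
    · exact ht5 _ (by simp)
  | diaR h =>
    have h1 := IH _ (Nat.lt_succ_self _) a b h
    rw [subR_cons] at h1 ⊢
    exact LD.diaR h1
  | @boxR n' _ _ _ u x A hf h =>
    obtain ⟨huR, huG, huw⟩ := hf
    obtain ⟨t, ht1, ht2, ht3, ht4, ht5⟩ :=
      exists_fresh R (subR a b R) Γ (subG a b Γ) [v, subL a b v, a, b]
    have h1 := IH _ (Nat.lt_succ_self _) u t h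
    rw [subR_cons, subR_id huR, subG_id huG, subL_self, subL_ne (Ne.symm huw)] at h1
    have h2 := IH _ (Nat.lt_succ_self _) a b h1
    rw [subR_cons, subL_ne (ht5 a (by simp))] at h2
    refine LD.boxR ⟨?_, ?_, ?_⟩ h2
    · exact not_mem_relLabels_subR ht1 (ht5 b (by simp))
    · exact not_mem_lfLabels_subG ht3 (ht5 b (by simp))
    · exact ht5 _ (by simp)
  | boxL h =>
    have h1 := IH _ (Nat.lt_succ_self _) a b h
    simp only [subR_cons, subG_cons] at h1 ⊢
    exact LD.boxL h1
  | @dx n' R Γ u v x A w hax hf h =>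
    obtain ⟨huR, huG, huv⟩ := hf
    obtain ⟨t, ht1, ht2, ht3, ht4, ht5⟩ :=
      exists_fresh R (subR a b R) Γ (subG a b Γ) [v, subL a b v, a, b]
    have h1 := IH _ (Nat.lt_succ_self _) u t h
    rw [subR_cons, subR_id huR, subG_id huG, subL_self, subL_ne (Ne.symm huv)] at h1
    have h2 := IH _ (Nat.lt_succ_self _) a b h1
    rw [subR_cons, subL_ne (ht5 a (by simp))] at h2
    refine LD.dx _ hax ⟨?_, ?_, ?_⟩ h2
    · exact not_mem_relLabels_subR ht1 (ht5 b (by simp))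
    · exact not_mem_lfLabels_subG ht3 (ht5 b (by simp))
    · exact ht5 _ (by simp)
  | isx hax hc h =>
    have h1 := IH _ (Nat.lt_succ_self _) a b h
    rw [subR_cons, subR_add] at h1
    rw [subR_add]
    exact LD.isx hax (hc.sub) h1
  | cx h =>
    have h1 := IH _ (Nat.lt_succ_self _) a b h
    simp only [subR_cons] at h1 ⊢
    exact LD.cx h1


/-- Height-preserving weakening. -/
lemma LD.weak : ∀ n {R : Multiset (Rel α.Char)} {Γ : Multiset (LF α.Char)} {v : ℕ}
    {C : Formula α.Char}, LD α 𝒜 n R Γ v C → ∀ (R0 : Multiset (Rel α.Char))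
    (Γ0 : Multiset (LF α.Char)), LD α 𝒜 n (R0 + R) (Γ0 + Γ) v C := by
  intro n
  induction n using Nat.strong_induction_on with
  | _ n IH =>
  intro R Γ v C h R0 Γ0
  cases h with
  | id n R Γ w p =>
    rw [Multiset.add_cons]; exact LD.id _ _ _ _ _
  | botL n R Γ w u A =>
    rw [Multiset.add_cons]; exact LD.botL _ _ _ _ _ _
  | orL h1 h2 =>
    have g1 := IH _ (Nat.lt_succ_self _) h1 R0 Γ0
    have g2 := IH _ (Nat.lt_succ_self _) h2 R0 Γ0
    rw [Multiset.add_cons] at g1 g2 ⊢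
    exact LD.orL g1 g2
  | orR1 h => exact LD.orR1 (IH _ (Nat.lt_succ_self _) h R0 Γ0)
  | orR2 h => exact LD.orR2 (IH _ (Nat.lt_succ_self _) h R0 Γ0)
  | andL h =>
    have g := IH _ (Nat.lt_succ_self _) h R0 Γ0
    rw [Multiset.add_cons, Multiset.add_cons] at g
    rw [Multiset.add_cons]
    exact LD.andL g
  | andR h1 h2 =>
    exact LD.andR (IH _ (Nat.lt_succ_self _) h1 R0 Γ0) (IH _ (Nat.lt_succ_self _) h2 R0 Γ0)
  | impL h1 h2 =>
    have g1 := IH _ (Nat.lt_succ_self _) h1 R0 Γ0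
    have g2 := IH _ (Nat.lt_succ_self _) h2 R0 Γ0
    rw [Multiset.add_cons] at g1 g2 ⊢
    exact LD.impL g1 g2
  | impR h =>
    have g := IH _ (Nat.lt_succ_self _) h R0 Γ0
    rw [Multiset.add_cons] at g
    exact LD.impR g
  | @diaL n' R Γ w u v x A B hf h =>
    obtain ⟨huR, huw, huG, huv⟩ := freshIn_cons_destruct hf
    obtain ⟨t, ht1, ht2, ht3, ht4, ht5⟩ := exists_fresh R (R0 + R) Γ (Γ0 + Γ) [w, v]
    have h1 := LD.sub n' u t h
    rw [subR_cons, subG_cons, subR_id huR, subG_id huG, subL_self,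
      subL_ne (Ne.symm huw), subL_ne (Ne.symm huv)] at h1
    have h2 := IH _ (Nat.lt_succ_self _) h1 R0 Γ0
    rw [Multiset.add_cons, Multiset.add_cons] at h2
    rw [Multiset.add_cons]
    refine LD.diaL ⟨ht2, ?_, ht5 _ (by simp)⟩ h2
    simp only [mem_lfLabels_cons, not_or]
    exact ⟨ht5 _ (by simp), ht4⟩
  | diaR h =>
    have g := IH _ (Nat.lt_succ_self _) h R0 Γ0
    rw [Multiset.add_cons] at g ⊢
    exact LD.diaR g
  | @boxR n' _ _ _ u x A hf h =>
    obtain ⟨huR, huG, huw⟩ := hf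
    obtain ⟨t, ht1, ht2, ht3, ht4, ht5⟩ := exists_fresh R (R0 + R) Γ (Γ0 + Γ) [v]
    have h1 := LD.sub n' u t h
    rw [subR_cons, subR_id huR, subG_id huG, subL_self, subL_ne (Ne.symm huw)] at h1
    have h2 := IH _ (Nat.lt_succ_self _) h1 R0 Γ0
    rw [Multiset.add_cons] at h2
    exact LD.boxR ⟨ht2, ht4, ht5 _ (by simp)⟩ h2
  | boxL h =>
    have g := IH _ (Nat.lt_succ_self _) h R0 Γ0
    rw [Multiset.add_cons, Multiset.add_cons, Multiset.add_cons] at g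
    rw [Multiset.add_cons, Multiset.add_cons]
    exact LD.boxL g
  | @dx n' R Γ u v x A w hax hf h =>
    obtain ⟨huR, huG, huv⟩ := hf
    obtain ⟨t, ht1, ht2, ht3, ht4, ht5⟩ := exists_fresh R (R0 + R) Γ (Γ0 + Γ) [v]
    have h1 := LD.sub n' u t h
    rw [subR_cons, subR_id huR, subG_id huG, subL_self, subL_ne (Ne.symm huv)] at h1
    have h2 := IH _ (Nat.lt_succ_self _) h1 R0 Γ0
    rw [Multiset.add_cons] at h2
    exact LD.dx _ hax ⟨ht2, ht4, ht5 _ (by simp)⟩ h2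
  | @isx n' R Γ w u v s x m A hax hc h =>
    have g := IH _ (Nat.lt_succ_self _) h R0 Γ0
    rw [Multiset.add_cons, add_left_comm] at g
    rw [add_left_comm]
    exact LD.isx hax hc g
  | cx h =>
    have g := IH _ (Nat.lt_succ_self _) h R0 Γ0
    rw [Multiset.add_cons, Multiset.add_cons] at g
    rw [Multiset.add_cons]
    exact LD.cx g

/-- Weakening for derivability. -/
lemma LDeriv.weak {R : Multiset (Rel α.Char)} {Γ : Multiset (LF α.Char)} {v : ℕ}
    {C : Formula α.Char} (h : LDeriv α 𝒜 R Γ v C) (R0 : Multiset (Rel α.Char))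
    (Γ0 : Multiset (LF α.Char)) : LDeriv α 𝒜 (R0 + R) (Γ0 + Γ) v C := by
  obtain ⟨n, h⟩ := h
  exact ⟨n, LD.weak n h R0 Γ0⟩


lemma LD.weak1R {n : ℕ} {R : Multiset (Rel α.Char)} {Γ : Multiset (LF α.Char)} {v : ℕ}
    {C : Formula α.Char} (h : LD α 𝒜 n R Γ v C) (a : Rel α.Char) :
    LD α 𝒜 n (a ::ₘ R) Γ v C := by
  have := LD.weak n h {a} 0
  simpa [Multiset.singleton_add] using this

lemma LD.weak1G {n : ℕ} {R : Multiset (Rel α.Char)} {Γ : Multiset (LF α.Char)} {v : ℕ}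
    {C : Formula α.Char} (h : LD α 𝒜 n R Γ v C) (b : LF α.Char) :
    LD α 𝒜 n R (b ::ₘ Γ) v C := by
  have := LD.weak n h 0 {b}
  simpa [Multiset.singleton_add] using this

lemma ms_rot {β : Type} (a b c : β) (s : Multiset β) :
    a ::ₘ b ::ₘ c ::ₘ s = c ::ₘ a ::ₘ b ::ₘ s := by
  rw [Multiset.cons_swap b c, Multiset.cons_swap a c]

lemma freshIn_of {u v : ℕ} {R : Multiset (Rel α.Char)} {Γ Γ' : Multiset (LF α.Char)}
    (hf : freshIn u R Γ v) (h : ∀ l, l ∈ lfLabels Γ' → l ∈ lfLabels Γ) :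
    freshIn u R Γ' v := ⟨hf.1, fun m => hf.2.1 (h _ m), hf.2.2⟩

/-- Relational contraction (via converses). -/
lemma LD.relCtr {n : ℕ} {R : Multiset (Rel α.Char)} {Γ : Multiset (LF α.Char)} {v : ℕ}
    {C : Formula α.Char} {p q : ℕ} {y : α.Char}
    (h : LD α 𝒜 n ((p, y, q) ::ₘ (p, y, q) ::ₘ R) Γ v C) :
    LDeriv α 𝒜 ((p, y, q) ::ₘ R) Γ v C := by
  have h1 : LD α 𝒜 n ((q, α.conv y, p) ::ₘ (p, y, q) ::ₘ (p, y, q) ::ₘ R) Γ v C :=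
    h.weak1R _
  have h2 : LD α 𝒜 (n + 1) ((q, α.conv y, p) ::ₘ (p, y, q) ::ₘ R) Γ v C := by
    apply LD.cx
    rw [α.conv_conv]
    exact h1
  exact ⟨n + 2, LD.cx (by rwa [Multiset.cons_swap] at h2)⟩

/-- Height-preserving invertibility of the left disjunction rule (first disjunct). -/
lemma LD.inv_or1 : ∀ n {R : Multiset (Rel α.Char)} {Γ : Multiset (LF α.Char)} {v : ℕ}
    {C : Formula α.Char}, LD α 𝒜 n R Γ v C →
    ∀ {w : ℕ} {A B : Formula α.Char} {Γ0 : Multiset (LF α.Char)},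
      Γ = (w, A.or B) ::ₘ Γ0 → LD α 𝒜 n R ((w, A) ::ₘ Γ0) v C := by
  intro n
  induction n using Nat.strong_induction_on with
  | _ n IH =>
  intro R Γ v C h w A B Γ0 e
  cases h with
  | id n R Γ' w₂ p =>
    rcases cons_eq_cons' e with ⟨h1, h2⟩ | ⟨Δ, h1, h2⟩
    · exact absurd (congrArg Prod.snd h1) (by simp)
    · subst h2; rw [Multiset.cons_swap]; exact LD.id _ _ _ _ _
  | botL n R Γ' w₂ u₂ D =>
    rcases cons_eq_cons' e with ⟨h1, h2⟩ | ⟨Δ, h1, h2⟩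
    · exact absurd (congrArg Prod.snd h1) (by simp)
    · subst h2; rw [Multiset.cons_swap]; exact LD.botL _ _ _ _ _ _
  | @orL n' _ Γ' w₂ _ A₂ B₂ _ h1 h2 =>
    rcases cons_eq_cons' e with ⟨h1e, h2e⟩ | ⟨Δ, h1e, h2e⟩
    · injection h1e with hw hD
      injection hD with hA hB
      subst hw; subst hA; subst hB; subst h2e
      exact h1.succ
    · subst h1e; subst h2e
      have g1 := IH _ (Nat.lt_succ_self _) h1 (Multiset.cons_swap _ _ _)
      have g2 := IH _ (Nat.lt_succ_self _) h2 (Multiset.cons_swap _ _ _)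
      rw [Multiset.cons_swap] at g1 g2
      rw [Multiset.cons_swap]
      exact LD.orL g1 g2
  | orR1 h => exact LD.orR1 (IH _ (Nat.lt_succ_self _) h e)
  | orR2 h => exact LD.orR2 (IH _ (Nat.lt_succ_self _) h e)
  | @andL n' _ Γ' w₂ _ A₂ B₂ _ h1 =>
    rcases cons_eq_cons' e with ⟨h1e, h2e⟩ | ⟨Δ, h1e, h2e⟩
    · exact absurd (congrArg Prod.snd h1e) (by simp)
    · subst h1e; subst h2e
      have g := IH _ (Nat.lt_succ_self _) h1 (ms_rot _ _ _ _)
      rw [← ms_rot] at g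
      rw [Multiset.cons_swap]
      exact LD.andL g
  | @andR n' _ _ _ A₂ B₂ h1 h2 =>
    exact LD.andR (IH _ (Nat.lt_succ_self _) h1 e) (IH _ (Nat.lt_succ_self _) h2 e)
  | @impL n' _ Γ' w₂ _ A₂ B₂ _ h1 h2 =>
    rcases cons_eq_cons' e with ⟨h1e, h2e⟩ | ⟨Δ, h1e, h2e⟩
    · exact absurd (congrArg Prod.snd h1e) (by simp)
    · subst h1e; subst h2e
      have g1 := IH _ (Nat.lt_succ_self _) h1 (Multiset.cons_swap _ _ _)
      have g2 := IH _ (Nat.lt_succ_self _) h2 (Multiset.cons_swap _ _ _)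
      rw [Multiset.cons_swap] at g1 g2
      rw [Multiset.cons_swap]
      exact LD.impL g1 g2
  | @impR n' _ _ _ A₂ B₂ h1 =>
    subst e
    have g := IH _ (Nat.lt_succ_self _) h1 (Multiset.cons_swap _ _ _)
    rw [Multiset.cons_swap] at g
    exact LD.impR g
  | @diaL n' _ Γ' w₂ u₂ _ x₂ A₂ _ hf h1 =>
    rcases cons_eq_cons' e with ⟨h1e, h2e⟩ | ⟨Δ, h1e, h2e⟩
    · exact absurd (congrArg Prod.snd h1e) (by simp)
    · subst h1e; subst h2e
      have g := IH _ (Nat.lt_succ_self _) h1 (Multiset.cons_swap _ _ _)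
      rw [Multiset.cons_swap] at g
      rw [Multiset.cons_swap]
      refine LD.diaL (freshIn_of hf ?_) g
      intro l
      simp only [mem_lfLabels_cons]
      tauto
  | diaR h1 =>
    exact LD.diaR (IH _ (Nat.lt_succ_self _) h1 e)
  | @boxR n' _ _ _ u₂ x₂ A₂ hf h1 =>
    subst e
    have g := IH _ (Nat.lt_succ_self _) h1 rfl
    refine LD.boxR (freshIn_of hf ?_) g
    intro l
    simp only [mem_lfLabels_cons]
    tauto
  | @boxL n' _ Γ' w₂ u₂ _ x₂ A₂ _ h1 =>
    rcases cons_eq_cons' e with ⟨h1e, h2e⟩ | ⟨Δ, h1e, h2e⟩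
    · exact absurd (congrArg Prod.snd h1e) (by simp)
    · subst h1e; subst h2e
      have g := IH _ (Nat.lt_succ_self _) h1 (ms_rot _ _ _ _)
      rw [← ms_rot] at g
      rw [Multiset.cons_swap]
      exact LD.boxL g
  | @dx n' _ _ u₂ _ x₂ A₂ w₂ hax hf h1 =>
    subst e
    have g := IH _ (Nat.lt_succ_self _) h1 rfl
    refine LD.dx _ hax (freshIn_of hf ?_) g
    intro l
    simp only [mem_lfLabels_cons]
    tauto
  | isx hax hc h1 =>
    exact LD.isx hax hc (IH _ (Nat.lt_succ_self _) h1 e)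
  | cx h1 =>
    exact LD.cx (IH _ (Nat.lt_succ_self _) h1 e)


/-- Height-preserving invertibility of the left disjunction rule (second disjunct). -/
lemma LD.inv_or2 : ∀ n {R : Multiset (Rel α.Char)} {Γ : Multiset (LF α.Char)} {v : ℕ}
    {C : Formula α.Char}, LD α 𝒜 n R Γ v C →
    ∀ {w : ℕ} {A B : Formula α.Char} {Γ0 : Multiset (LF α.Char)},
      Γ = (w, A.or B) ::ₘ Γ0 → LD α 𝒜 n R ((w, B) ::ₘ Γ0) v C := by
  intro n
  induction n using Nat.strong_induction_on with
  | _ n IH =>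
  intro R Γ v C h w A B Γ0 e
  cases h with
  | id n R Γ' w₂ p =>
    rcases cons_eq_cons' e with ⟨h1, h2⟩ | ⟨Δ, h1, h2⟩
    · exact absurd (congrArg Prod.snd h1) (by simp)
    · subst h2; rw [Multiset.cons_swap]; exact LD.id _ _ _ _ _
  | botL n R Γ' w₂ u₂ D =>
    rcases cons_eq_cons' e with ⟨h1, h2⟩ | ⟨Δ, h1, h2⟩
    · exact absurd (congrArg Prod.snd h1) (by simp)
    · subst h2; rw [Multiset.cons_swap]; exact LD.botL _ _ _ _ _ _
  | @orL n' _ Γ' w₂ _ A₂ B₂ _ h1 h2 =>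
    rcases cons_eq_cons' e with ⟨h1e, h2e⟩ | ⟨Δ, h1e, h2e⟩
    · injection h1e with hw hD
      injection hD with hA hB
      subst hw; subst hA; subst hB; subst h2e
      exact h2.succ
    · subst h1e; subst h2e
      have g1 := IH _ (Nat.lt_succ_self _) h1 (Multiset.cons_swap _ _ _)
      have g2 := IH _ (Nat.lt_succ_self _) h2 (Multiset.cons_swap _ _ _)
      rw [Multiset.cons_swap] at g1 g2
      rw [Multiset.cons_swap]
      exact LD.orL g1 g2
  | orR1 h => exact LD.orR1 (IH _ (Nat.lt_succ_self _) h e)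
  | orR2 h => exact LD.orR2 (IH _ (Nat.lt_succ_self _) h e)
  | @andL n' _ Γ' w₂ _ A₂ B₂ _ h1 =>
    rcases cons_eq_cons' e with ⟨h1e, h2e⟩ | ⟨Δ, h1e, h2e⟩
    · exact absurd (congrArg Prod.snd h1e) (by simp)
    · subst h1e; subst h2e
      have g := IH _ (Nat.lt_succ_self _) h1 (ms_rot _ _ _ _)
      rw [← ms_rot] at g
      rw [Multiset.cons_swap]
      exact LD.andL g
  | @andR n' _ _ _ A₂ B₂ h1 h2 =>
    exact LD.andR (IH _ (Nat.lt_succ_self _) h1 e) (IH _ (Nat.lt_succ_self _) h2 e)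
  | @impL n' _ Γ' w₂ _ A₂ B₂ _ h1 h2 =>
    rcases cons_eq_cons' e with ⟨h1e, h2e⟩ | ⟨Δ, h1e, h2e⟩
    · exact absurd (congrArg Prod.snd h1e) (by simp)
    · subst h1e; subst h2e
      have g1 := IH _ (Nat.lt_succ_self _) h1 (Multiset.cons_swap _ _ _)
      have g2 := IH _ (Nat.lt_succ_self _) h2 (Multiset.cons_swap _ _ _)
      rw [Multiset.cons_swap] at g1 g2
      rw [Multiset.cons_swap]
      exact LD.impL g1 g2
  | @impR n' _ _ _ A₂ B₂ h1 =>
    subst e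
    have g := IH _ (Nat.lt_succ_self _) h1 (Multiset.cons_swap _ _ _)
    rw [Multiset.cons_swap] at g
    exact LD.impR g
  | @diaL n' _ Γ' w₂ u₂ _ x₂ A₂ _ hf h1 =>
    rcases cons_eq_cons' e with ⟨h1e, h2e⟩ | ⟨Δ, h1e, h2e⟩
    · exact absurd (congrArg Prod.snd h1e) (by simp)
    · subst h1e; subst h2e
      have g := IH _ (Nat.lt_succ_self _) h1 (Multiset.cons_swap _ _ _)
      rw [Multiset.cons_swap] at g
      rw [Multiset.cons_swap]
      refine LD.diaL (freshIn_of hf ?_) g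
      intro l
      simp only [mem_lfLabels_cons]
      tauto
  | diaR h1 =>
    exact LD.diaR (IH _ (Nat.lt_succ_self _) h1 e)
  | @boxR n' _ _ _ u₂ x₂ A₂ hf h1 =>
    subst e
    have g := IH _ (Nat.lt_succ_self _) h1 rfl
    refine LD.boxR (freshIn_of hf ?_) g
    intro l
    simp only [mem_lfLabels_cons]
    tauto
  | @boxL n' _ Γ' w₂ u₂ _ x₂ A₂ _ h1 =>
    rcases cons_eq_cons' e with ⟨h1e, h2e⟩ | ⟨Δ, h1e, h2e⟩
    · exact absurd (congrArg Prod.snd h1e) (by simp)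
    · subst h1e; subst h2e
      have g := IH _ (Nat.lt_succ_self _) h1 (ms_rot _ _ _ _)
      rw [← ms_rot] at g
      rw [Multiset.cons_swap]
      exact LD.boxL g
  | @dx n' _ _ u₂ _ x₂ A₂ w₂ hax hf h1 =>
    subst e
    have g := IH _ (Nat.lt_succ_self _) h1 rfl
    refine LD.dx _ hax (freshIn_of hf ?_) g
    intro l
    simp only [mem_lfLabels_cons]
    tauto
  | isx hax hc h1 =>
    exact LD.isx hax hc (IH _ (Nat.lt_succ_self _) h1 e)
  | cx h1 =>
    exact LD.cx (IH _ (Nat.lt_succ_self _) h1 e)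

lemma ms_rot4 {β : Type} (a b c d : β) (s : Multiset β) :
    a ::ₘ b ::ₘ c ::ₘ d ::ₘ s = c ::ₘ d ::ₘ a ::ₘ b ::ₘ s := by
  rw [ms_rot a b c, ms_rot a b d]

/-- Height-preserving invertibility of the left conjunction rule. -/
lemma LD.inv_and : ∀ n {R : Multiset (Rel α.Char)} {Γ : Multiset (LF α.Char)} {v : ℕ}
    {C : Formula α.Char}, LD α 𝒜 n R Γ v C →
    ∀ {w : ℕ} {A B : Formula α.Char} {Γ0 : Multiset (LF α.Char)},
      Γ = (w, A.and B) ::ₘ Γ0 → LD α 𝒜 n R ((w, A) ::ₘ (w, B) ::ₘ Γ0) v C := by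
  intro n
  induction n using Nat.strong_induction_on with
  | _ n IH =>
  intro R Γ v C h w A B Γ0 e
  cases h with
  | id n R Γ' w₂ p =>
    rcases cons_eq_cons' e with ⟨h1, h2⟩ | ⟨Δ, h1, h2⟩
    · exact absurd (congrArg Prod.snd h1) (by simp)
    · subst h2; rw [ms_rot]; exact LD.id _ _ _ _ _
  | botL n R Γ' w₂ u₂ D =>
    rcases cons_eq_cons' e with ⟨h1, h2⟩ | ⟨Δ, h1, h2⟩
    · exact absurd (congrArg Prod.snd h1) (by simp)
    · subst h2; rw [ms_rot]; exact LD.botL _ _ _ _ _ _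
  | @orL n' _ Γ' w₂ _ A₂ B₂ _ h1 h2 =>
    rcases cons_eq_cons' e with ⟨h1e, h2e⟩ | ⟨Δ, h1e, h2e⟩
    · exact absurd (congrArg Prod.snd h1e) (by simp)
    · subst h1e; subst h2e
      have g1 := IH _ (Nat.lt_succ_self _) h1 (Multiset.cons_swap _ _ _)
      have g2 := IH _ (Nat.lt_succ_self _) h2 (Multiset.cons_swap _ _ _)
      rw [ms_rot] at g1 g2
      rw [ms_rot]
      exact LD.orL g1 g2
  | orR1 h => exact LD.orR1 (IH _ (Nat.lt_succ_self _) h e)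
  | orR2 h => exact LD.orR2 (IH _ (Nat.lt_succ_self _) h e)
  | @andL n' _ Γ' w₂ _ A₂ B₂ _ h1 =>
    rcases cons_eq_cons' e with ⟨h1e, h2e⟩ | ⟨Δ, h1e, h2e⟩
    · injection h1e with hw hD
      injection hD with hA hB
      subst hw; subst hA; subst hB; subst h2e
      exact h1.succ
    · subst h1e; subst h2e
      have g := IH _ (Nat.lt_succ_self _) h1 (ms_rot _ _ _ _)
      rw [ms_rot4] at g
      rw [ms_rot]
      exact LD.andL g
  | @andR n' _ _ _ A₂ B₂ h1 h2 =>
    exact LD.andR (IH _ (Nat.lt_succ_self _) h1 e) (IH _ (Nat.lt_succ_self _) h2 e)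
  | @impL n' _ Γ' w₂ _ A₂ B₂ _ h1 h2 =>
    rcases cons_eq_cons' e with ⟨h1e, h2e⟩ | ⟨Δ, h1e, h2e⟩
    · exact absurd (congrArg Prod.snd h1e) (by simp)
    · subst h1e; subst h2e
      have g1 := IH _ (Nat.lt_succ_self _) h1 (Multiset.cons_swap _ _ _)
      have g2 := IH _ (Nat.lt_succ_self _) h2 (Multiset.cons_swap _ _ _)
      rw [ms_rot] at g1 g2
      rw [ms_rot]
      exact LD.impL g1 g2
  | @impR n' _ _ _ A₂ B₂ h1 =>
    subst e
    have g := IH _ (Nat.lt_succ_self _) h1 (Multiset.cons_swap _ _ _)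
    rw [ms_rot] at g
    exact LD.impR g
  | @diaL n' _ Γ' w₂ u₂ _ x₂ A₂ _ hf h1 =>
    rcases cons_eq_cons' e with ⟨h1e, h2e⟩ | ⟨Δ, h1e, h2e⟩
    · exact absurd (congrArg Prod.snd h1e) (by simp)
    · subst h1e; subst h2e
      have g := IH _ (Nat.lt_succ_self _) h1 (Multiset.cons_swap _ _ _)
      rw [ms_rot] at g
      rw [ms_rot]
      refine LD.diaL (freshIn_of hf ?_) g
      intro l
      simp only [mem_lfLabels_cons]
      tauto
  | diaR h1 =>
    exact LD.diaR (IH _ (Nat.lt_succ_self _) h1 e)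
  | @boxR n' _ _ _ u₂ x₂ A₂ hf h1 =>
    subst e
    have g := IH _ (Nat.lt_succ_self _) h1 rfl
    refine LD.boxR (freshIn_of hf ?_) g
    intro l
    simp only [mem_lfLabels_cons]
    tauto
  | @boxL n' _ Γ' w₂ u₂ _ x₂ A₂ _ h1 =>
    rcases cons_eq_cons' e with ⟨h1e, h2e⟩ | ⟨Δ, h1e, h2e⟩
    · exact absurd (congrArg Prod.snd h1e) (by simp)
    · subst h1e; subst h2e
      have g := IH _ (Nat.lt_succ_self _) h1 (ms_rot _ _ _ _)
      rw [ms_rot4] at g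
      rw [ms_rot]
      exact LD.boxL g
  | @dx n' _ _ u₂ _ x₂ A₂ w₂ hax hf h1 =>
    subst e
    have g := IH _ (Nat.lt_succ_self _) h1 rfl
    refine LD.dx _ hax (freshIn_of hf ?_) g
    intro l
    simp only [mem_lfLabels_cons]
    tauto
  | isx hax hc h1 =>
    exact LD.isx hax hc (IH _ (Nat.lt_succ_self _) h1 e)
  | cx h1 =>
    exact LD.cx (IH _ (Nat.lt_succ_self _) h1 e)

/-- Height-preserving invertibility of the left implication rule (right premise). -/
lemma LD.inv_impl : ∀ n {R : Multiset (Rel α.Char)} {Γ : Multiset (LF α.Char)} {v : ℕ}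
    {C : Formula α.Char}, LD α 𝒜 n R Γ v C →
    ∀ {w : ℕ} {A B : Formula α.Char} {Γ0 : Multiset (LF α.Char)},
      Γ = (w, A.imp B) ::ₘ Γ0 → LD α 𝒜 n R ((w, B) ::ₘ Γ0) v C := by
  intro n
  induction n using Nat.strong_induction_on with
  | _ n IH =>
  intro R Γ v C h w A B Γ0 e
  cases h with
  | id n R Γ' w₂ p =>
    rcases cons_eq_cons' e with ⟨h1, h2⟩ | ⟨Δ, h1, h2⟩
    · exact absurd (congrArg Prod.snd h1) (by simp)
    · subst h2; rw [Multiset.cons_swap]; exact LD.id _ _ _ _ _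
  | botL n R Γ' w₂ u₂ D =>
    rcases cons_eq_cons' e with ⟨h1, h2⟩ | ⟨Δ, h1, h2⟩
    · exact absurd (congrArg Prod.snd h1) (by simp)
    · subst h2; rw [Multiset.cons_swap]; exact LD.botL _ _ _ _ _ _
  | @orL n' _ Γ' w₂ _ A₂ B₂ _ h1 h2 =>
    rcases cons_eq_cons' e with ⟨h1e, h2e⟩ | ⟨Δ, h1e, h2e⟩
    · exact absurd (congrArg Prod.snd h1e) (by simp)
    · subst h1e; subst h2e
      have g1 := IH _ (Nat.lt_succ_self _) h1 (Multiset.cons_swap _ _ _)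
      have g2 := IH _ (Nat.lt_succ_self _) h2 (Multiset.cons_swap _ _ _)
      rw [Multiset.cons_swap] at g1 g2
      rw [Multiset.cons_swap]
      exact LD.orL g1 g2
  | orR1 h => exact LD.orR1 (IH _ (Nat.lt_succ_self _) h e)
  | orR2 h => exact LD.orR2 (IH _ (Nat.lt_succ_self _) h e)
  | @andL n' _ Γ' w₂ _ A₂ B₂ _ h1 =>
    rcases cons_eq_cons' e with ⟨h1e, h2e⟩ | ⟨Δ, h1e, h2e⟩
    · exact absurd (congrArg Prod.snd h1e) (by simp)
    · subst h1e; subst h2e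
      have g := IH _ (Nat.lt_succ_self _) h1 (ms_rot _ _ _ _)
      rw [← ms_rot] at g
      rw [Multiset.cons_swap]
      exact LD.andL g
  | @andR n' _ _ _ A₂ B₂ h1 h2 =>
    exact LD.andR (IH _ (Nat.lt_succ_self _) h1 e) (IH _ (Nat.lt_succ_self _) h2 e)
  | @impL n' _ Γ' w₂ _ A₂ B₂ _ h1 h2 =>
    rcases cons_eq_cons' e with ⟨h1e, h2e⟩ | ⟨Δ, h1e, h2e⟩
    · injection h1e with hw hD
      injection hD with hA hB
      subst hw; subst hA; subst hB; subst h2e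
      exact h2.succ
    · subst h1e; subst h2e
      have g1 := IH _ (Nat.lt_succ_self _) h1 (Multiset.cons_swap _ _ _)
      have g2 := IH _ (Nat.lt_succ_self _) h2 (Multiset.cons_swap _ _ _)
      rw [Multiset.cons_swap] at g1 g2
      rw [Multiset.cons_swap]
      exact LD.impL g1 g2
  | @impR n' _ _ _ A₂ B₂ h1 =>
    subst e
    have g := IH _ (Nat.lt_succ_self _) h1 (Multiset.cons_swap _ _ _)
    rw [Multiset.cons_swap] at g
    exact LD.impR g
  | @diaL n' _ Γ' w₂ u₂ _ x₂ A₂ _ hf h1 =>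
    rcases cons_eq_cons' e with ⟨h1e, h2e⟩ | ⟨Δ, h1e, h2e⟩
    · exact absurd (congrArg Prod.snd h1e) (by simp)
    · subst h1e; subst h2e
      have g := IH _ (Nat.lt_succ_self _) h1 (Multiset.cons_swap _ _ _)
      rw [Multiset.cons_swap] at g
      rw [Multiset.cons_swap]
      refine LD.diaL (freshIn_of hf ?_) g
      intro l
      simp only [mem_lfLabels_cons]
      tauto
  | diaR h1 =>
    exact LD.diaR (IH _ (Nat.lt_succ_self _) h1 e)
  | @boxR n' _ _ _ u₂ x₂ A₂ hf h1 =>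
    subst e
    have g := IH _ (Nat.lt_succ_self _) h1 rfl
    refine LD.boxR (freshIn_of hf ?_) g
    intro l
    simp only [mem_lfLabels_cons]
    tauto
  | @boxL n' _ Γ' w₂ u₂ _ x₂ A₂ _ h1 =>
    rcases cons_eq_cons' e with ⟨h1e, h2e⟩ | ⟨Δ, h1e, h2e⟩
    · exact absurd (congrArg Prod.snd h1e) (by simp)
    · subst h1e; subst h2e
      have g := IH _ (Nat.lt_succ_self _) h1 (ms_rot _ _ _ _)
      rw [← ms_rot] at g
      rw [Multiset.cons_swap]
      exact LD.boxL g
  | @dx n' _ _ u₂ _ x₂ A₂ w₂ hax hf h1 =>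
    subst e
    have g := IH _ (Nat.lt_succ_self _) h1 rfl
    refine LD.dx _ hax (freshIn_of hf ?_) g
    intro l
    simp only [mem_lfLabels_cons]
    tauto
  | isx hax hc h1 =>
    exact LD.isx hax hc (IH _ (Nat.lt_succ_self _) h1 e)
  | cx h1 =>
    exact LD.cx (IH _ (Nat.lt_succ_self _) h1 e)


/-- Height-preserving invertibility of the left diamond rule. -/
lemma LD.inv_dia : ∀ n {R : Multiset (Rel α.Char)} {Γ : Multiset (LF α.Char)} {v : ℕ}
    {C : Formula α.Char}, LD α 𝒜 n R Γ v C →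
    ∀ {w : ℕ} {x : α.Char} {A : Formula α.Char} {Γ0 : Multiset (LF α.Char)} {t : ℕ},
      Γ = (w, Formula.dia x A) ::ₘ Γ0 →
      t ∉ relLabels R → t ∉ lfLabels Γ0 → t ≠ v → t ≠ w →
      LD α 𝒜 n ((w, x, t) ::ₘ R) ((t, A) ::ₘ Γ0) v C := by
  intro n
  induction n using Nat.strong_induction_on with
  | _ n IH =>
  intro R Γ v C h w x A Γ0 t e ht1 ht2 ht3 ht4
  cases h with
  | id n R Γ' w₂ p =>
    rcases cons_eq_cons' e with ⟨h1, h2⟩ | ⟨Δ, h1, h2⟩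
    · exact absurd (congrArg Prod.snd h1) (by simp)
    · subst h2; rw [Multiset.cons_swap]; exact LD.id _ _ _ _ _
  | botL n R Γ' w₂ u₂ D =>
    rcases cons_eq_cons' e with ⟨h1, h2⟩ | ⟨Δ, h1, h2⟩
    · exact absurd (congrArg Prod.snd h1) (by simp)
    · subst h2; rw [Multiset.cons_swap]; exact LD.botL _ _ _ _ _ _
  | @orL n' _ Γ' w₂ _ A₂ B₂ _ h1 h2 =>
    rcases cons_eq_cons' e with ⟨h1e, h2e⟩ | ⟨Δ, h1e, h2e⟩
    · exact absurd (congrArg Prod.snd h1e) (by simp)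
    · subst h1e; subst h2e
      simp only [mem_lfLabels_cons, not_or] at ht2
      have g1 := IH _ (Nat.lt_succ_self _) h1 (Multiset.cons_swap _ _ _) ht1
        (by simp only [mem_lfLabels_cons, not_or]; exact ⟨ht2.1, ht2.2⟩) ht3 ht4
      have g2 := IH _ (Nat.lt_succ_self _) h2 (Multiset.cons_swap _ _ _) ht1
        (by simp only [mem_lfLabels_cons, not_or]; exact ⟨ht2.1, ht2.2⟩) ht3 ht4
      rw [Multiset.cons_swap] at g1 g2
      rw [Multiset.cons_swap]
      exact LD.orL g1 g2
  | orR1 h => exact LD.orR1 (IH _ (Nat.lt_succ_self _) h e ht1 ht2 ht3 ht4)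
  | orR2 h => exact LD.orR2 (IH _ (Nat.lt_succ_self _) h e ht1 ht2 ht3 ht4)
  | @andL n' _ Γ' w₂ _ A₂ B₂ _ h1 =>
    rcases cons_eq_cons' e with ⟨h1e, h2e⟩ | ⟨Δ, h1e, h2e⟩
    · exact absurd (congrArg Prod.snd h1e) (by simp)
    · subst h1e; subst h2e
      simp only [mem_lfLabels_cons, not_or] at ht2
      have g := IH _ (Nat.lt_succ_self _) h1 (ms_rot _ _ _ _) ht1
        (by simp only [mem_lfLabels_cons, not_or]; exact ⟨ht2.1, ht2.1, ht2.2⟩) ht3 ht4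
      rw [← ms_rot] at g
      rw [Multiset.cons_swap]
      exact LD.andL g
  | @andR n' _ _ _ A₂ B₂ h1 h2 =>
    exact LD.andR (IH _ (Nat.lt_succ_self _) h1 e ht1 ht2 ht3 ht4)
      (IH _ (Nat.lt_succ_self _) h2 e ht1 ht2 ht3 ht4)
  | @impL n' _ Γ' w₂ _ A₂ B₂ _ h1 h2 =>
    rcases cons_eq_cons' e with ⟨h1e, h2e⟩ | ⟨Δ, h1e, h2e⟩
    · exact absurd (congrArg Prod.snd h1e) (by simp)
    · subst h1e; subst h2e
      simp only [mem_lfLabels_cons, not_or] at ht2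
      have g1 := IH _ (Nat.lt_succ_self _) h1 (Multiset.cons_swap _ _ _) ht1
        (by simp only [mem_lfLabels_cons, not_or]; exact ⟨ht2.1, ht2.2⟩) ht2.1 ht4
      have g2 := IH _ (Nat.lt_succ_self _) h2 (Multiset.cons_swap _ _ _) ht1
        (by simp only [mem_lfLabels_cons, not_or]; exact ⟨ht2.1, ht2.2⟩) ht3 ht4
      rw [Multiset.cons_swap] at g1 g2
      rw [Multiset.cons_swap]
      exact LD.impL g1 g2
  | @impR n' _ _ _ A₂ B₂ h1 =>
    subst e
    have g := IH _ (Nat.lt_succ_self _) h1 (Multiset.cons_swap _ _ _) ht1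
      (by simp only [mem_lfLabels_cons, not_or]; exact ⟨ht3, ht2⟩) ht3 ht4
    rw [Multiset.cons_swap] at g
    exact LD.impR g
  | @diaL n' _ Γ' w₂ u₂ _ y A₂ _ hf h1 =>
    rcases cons_eq_cons' e with ⟨h1e, h2e⟩ | ⟨Δ, h1e, h2e⟩
    · injection h1e with hw hD
      injection hD with hx hA
      subst hw; subst hx; subst hA; subst h2e
      obtain ⟨huR, huw, huG, huv⟩ := freshIn_cons_destruct hf
      have h1r := LD.sub n' u₂ t h1
      rw [subR_cons, subG_cons, subR_id huR, subG_id huG, subL_self,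
        subL_ne (Ne.symm huw), subL_ne (Ne.symm huv)] at h1r
      exact h1r.succ
    · subst h1e; subst h2e
      obtain ⟨huR, huG', huv⟩ := hf
      simp only [mem_lfLabels_cons, not_or] at huG'
      obtain ⟨huw₂, huw, huΔ⟩ := huG'
      simp only [mem_lfLabels_cons, not_or] at ht2
      obtain ⟨htw₂, htΔ⟩ := ht2
      obtain ⟨t₂, k1, -, k3, -, k5⟩ :=
        exists_fresh R 0 ((w₂, Formula.dia y A₂) ::ₘ (w, Formula.dia x A) ::ₘ Δ) 0 [v, t, w]
      simp only [mem_lfLabels_cons, not_or] at k3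
      obtain ⟨k3a, k3b, k3c⟩ := k3
      have h1r := LD.sub n' u₂ t₂ h1
      rw [subR_cons, subG_cons, subG_cons, subR_id huR, subG_id huΔ, subL_self,
        subL_ne (Ne.symm huw₂), subL_ne (Ne.symm huw), subL_ne (Ne.symm huv)] at h1r
      have g := IH _ (Nat.lt_succ_self _) h1r (Multiset.cons_swap _ _ _)
        (by simp only [mem_relLabels_cons, not_or]
            exact ⟨fun hh => htw₂ hh, fun hh => (k5 t (by simp)) hh.symm, ht1⟩)
        (by simp only [mem_lfLabels_cons, not_or]
            exact ⟨fun hh => (k5 t (by simp)) hh.symm, htΔ⟩) ht3 ht4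
      rw [Multiset.cons_swap]
      refine LD.diaL (u := t₂) ⟨?_, ?_, k5 v (by simp)⟩ ?_
      · simp only [mem_relLabels_cons, not_or]
        exact ⟨k5 w (by simp), k5 t (by simp), k1⟩
      · simp only [mem_lfLabels_cons, not_or]
        exact ⟨k3a, k5 t (by simp), k3c⟩
      · rwa [Multiset.cons_swap ((t, A) : LF α.Char),
          Multiset.cons_swap ((w, x, t) : Rel α.Char)] at g
  | @diaR n' _ _ _ u₂ y A₂ h1 =>
    simp only [mem_relLabels_cons, not_or] at ht1
    have g := IH _ (Nat.lt_succ_self _) h1 e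
      (by simp only [mem_relLabels_cons, not_or]; exact ht1) ht2
      (fun hh => ht1.2.1 hh) ht4
    rw [Multiset.cons_swap] at g ⊢
    exact LD.diaR g
  | @boxR n' _ _ _ u₂ y A₂ hf h1 =>
    subst e
    obtain ⟨huR, huG', huv⟩ := hf
    simp only [mem_lfLabels_cons, not_or] at huG'
    obtain ⟨huw, huG⟩ := huG'
    obtain ⟨t₂, k1, -, k3, -, k5⟩ :=
      exists_fresh R 0 ((w, Formula.dia x A) ::ₘ Γ0) 0 [v, t, w]
    simp only [mem_lfLabels_cons, not_or] at k3
    have h1r := LD.sub n' u₂ t₂ h1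
    rw [subR_cons, subG_cons, subR_id huR, subG_id huG, subL_self,
      subL_ne (Ne.symm huv), subL_ne (Ne.symm huw)] at h1r
    have g := IH _ (Nat.lt_succ_self _) h1r rfl
      (by simp only [mem_relLabels_cons, not_or]
          exact ⟨ht3, fun hh => (k5 t (by simp)) hh.symm, ht1⟩)
      ht2 (fun hh => (k5 t (by simp)) hh.symm) ht4
    rw [Multiset.cons_swap] at g
    refine LD.boxR ⟨?_, ?_, k5 v (by simp)⟩ g
    · simp only [mem_relLabels_cons, not_or]
      exact ⟨k5 w (by simp), k5 t (by simp), k1⟩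
    · simp only [mem_lfLabels_cons, not_or]
      exact ⟨k5 t (by simp), k3.2⟩
  | @boxL n' _ Γ' w₂ u₂ _ y A₂ _ h1 =>
    rcases cons_eq_cons' e with ⟨h1e, h2e⟩ | ⟨Δ, h1e, h2e⟩
    · exact absurd (congrArg Prod.snd h1e) (by simp)
    · subst h1e; subst h2e
      simp only [mem_relLabels_cons, not_or] at ht1
      simp only [mem_lfLabels_cons, not_or] at ht2
      have g := IH _ (Nat.lt_succ_self _) h1 (ms_rot _ _ _ _)
        (by simp only [mem_relLabels_cons, not_or]; exact ht1)
        (by simp only [mem_lfLabels_cons, not_or]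
            exact ⟨ht1.1, ht1.2.1, ht2.2⟩) ht3 ht4
      rw [← ms_rot, Multiset.cons_swap ((w, x, t) : Rel α.Char)] at g
      have g2 := LD.boxL g
      rwa [Multiset.cons_swap ((w₂, y, u₂) : Rel α.Char),
        Multiset.cons_swap ((w₂, Formula.box y A₂) : LF α.Char)] at g2
  | @dx n' _ _ u₂ _ y A₂ w₂ hax hf h1 =>
    subst e
    obtain ⟨huR, huG, huv⟩ := hf
    simp only [mem_lfLabels_cons, not_or] at huG
    obtain ⟨t₂, k1, -, k3, -, k5⟩ :=
      exists_fresh R 0 ((w, Formula.dia x A) ::ₘ Γ0) 0 [v, t, w]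
    simp only [mem_lfLabels_cons, not_or] at k3
    have h1r := LD.sub n' u₂ t₂ h1
    rw [subR_cons, subR_id huR,
      subG_id (by simp only [mem_lfLabels_cons, not_or]; exact huG), subL_self,
      subL_ne (Ne.symm huv)] at h1r
    have hex : ∃ W, W ≠ t ∧ LD α 𝒜 n' ((W, y, t₂) ::ₘ R) ((w, Formula.dia x A) ::ₘ Γ0) v C := by
      by_cases hW : subL u₂ t₂ w₂ = t
      · obtain ⟨t₃, m1, -, m3, -, m5⟩ :=
          exists_fresh R 0 ((w, Formula.dia x A) ::ₘ Γ0) 0 [v, t, w, t₂]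
        simp only [mem_lfLabels_cons, not_or] at m3
        have h1rr := LD.sub n' t t₃ h1r
        rw [hW, subR_cons, subR_id ht1,
          subG_id (by simp only [mem_lfLabels_cons, not_or]; exact ⟨ht4, ht2⟩),
          subL_self, subL_ne (Ne.symm ht3), subL_ne (fun hh => (k5 t (by simp)) hh)] at h1rr
        exact ⟨t₃, fun hh => (m5 t (by simp)) hh, h1rr⟩
      · exact ⟨_, hW, h1r⟩
    obtain ⟨W, hWt, h1f⟩ := hex
    have g := IH _ (Nat.lt_succ_self _) h1f rfl
      (by simp only [mem_relLabels_cons, not_or]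
          exact ⟨fun hh => hWt hh.symm, fun hh => (k5 t (by simp)) hh.symm, ht1⟩)
      ht2 ht3 ht4
    rw [Multiset.cons_swap] at g
    refine LD.dx W hax ⟨?_, ?_, k5 v (by simp)⟩ g
    · simp only [mem_relLabels_cons, not_or]
      exact ⟨k5 w (by simp), k5 t (by simp), k1⟩
    · simp only [mem_lfLabels_cons, not_or]
      exact ⟨k5 t (by simp), k3.2⟩
  | @isx n' R₀ _ w₀ u₀ _ s y m A₂ hax hc h1 =>
    subst e
    cases s with
    | nil =>
      cases hc with
      | nil =>
        rw [zero_add] at h1 ht1 ⊢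
        have hex : ∃ W, W ≠ t ∧
            LD α 𝒜 n' ((W, y, W) ::ₘ R₀) ((w, Formula.dia x A) ::ₘ Γ0) v C := by
          by_cases hW : w₀ = t
          · rw [hW] at h1
            obtain ⟨t₃, m1, -, m3, -, m5⟩ :=
              exists_fresh R₀ 0 ((w, Formula.dia x A) ::ₘ Γ0) 0 [v, t, w]
            have h1rr := LD.sub n' t t₃ h1
            rw [subR_cons, subR_id ht1,
              subG_id (by simp only [mem_lfLabels_cons, not_or]; exact ⟨ht4, ht2⟩),
              subL_self, subL_ne (Ne.symm ht3)] at h1rr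
            exact ⟨t₃, fun hh => (m5 t (by simp)) hh, h1rr⟩
          · exact ⟨w₀, hW, h1⟩
        obtain ⟨W, hWt, h1f⟩ := hex
        have g := IH _ (Nat.lt_succ_self _) h1f rfl
          (by simp only [mem_relLabels_cons, not_or]
              exact ⟨fun hh => hWt hh.symm, fun hh => hWt hh.symm, ht1⟩)
          ht2 ht3 ht4
        have g' : LD α 𝒜 n' ((W, y, W) ::ₘ (0 + ((w, x, t) ::ₘ R₀)))
            ((t, A) ::ₘ Γ0) v C := by
          rw [zero_add, ← Multiset.cons_swap]
          exact g
        have := LD.isx hax (Chain.nil W) g'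
        rwa [zero_add] at this
    | cons z s' =>
      obtain ⟨hw₀, hu₀⟩ := hc.mem_labels
      have hw₀' : w₀ ∈ relLabels (m + R₀) := by
        rw [mem_relLabels_add]; exact Or.inl hw₀
      have hu₀' : u₀ ∈ relLabels (m + R₀) := by
        rw [mem_relLabels_add]; exact Or.inl hu₀
      have g := IH _ (Nat.lt_succ_self _) h1 rfl
        (by simp only [mem_relLabels_cons, not_or]
            exact ⟨fun hh => ht1 (hh ▸ hw₀'), fun hh => ht1 (hh ▸ hu₀'), ht1⟩)
        ht2 ht3 ht4
      have g' : LD α 𝒜 n' ((w₀, y, u₀) ::ₘ (m + ((w, x, t) ::ₘ R₀)))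
          ((t, A) ::ₘ Γ0) v C := by
        rw [Multiset.add_cons, ← Multiset.cons_swap]
        exact g
      have := LD.isx hax hc g'
      rwa [Multiset.add_cons] at this
  | @cx n' _ _ w₂ u₂ _ y A₂ h1 =>
    subst e
    simp only [mem_relLabels_cons, not_or] at ht1
    have g := IH _ (Nat.lt_succ_self _) h1 rfl
      (by simp only [mem_relLabels_cons, not_or]
          exact ⟨ht1.1, ht1.2.1, ht1.2.1, ht1.1, ht1.2.2⟩)
      ht2 ht3 ht4
    rw [← ms_rot] at g
    have g2 := LD.cx g
    rwa [Multiset.cons_swap] at g2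


/-- Height-preserving invertibility of the right conjunction rule. -/
lemma LD.inv_andR1 : ∀ n {R : Multiset (Rel α.Char)} {Γ : Multiset (LF α.Char)} {v : ℕ}
    {D : Formula α.Char}, LD α 𝒜 n R Γ v D →
    ∀ {A B : Formula α.Char}, D = A.and B → LD α 𝒜 n R Γ v A := by
  intro n
  induction n using Nat.strong_induction_on with
  | _ n IH =>
  intro R Γ v D h A B eD
  cases h with
  | id => exact absurd eD (by simp)
  | botL => exact LD.botL _ _ _ _ _ _
  | orL h1 h2 =>
    exact LD.orL (IH _ (Nat.lt_succ_self _) h1 eD) (IH _ (Nat.lt_succ_self _) h2 eD)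
  | orR1 h => exact absurd eD (by simp)
  | orR2 h => exact absurd eD (by simp)
  | andL h => exact LD.andL (IH _ (Nat.lt_succ_self _) h eD)
  | andR h1 h2 =>
    injection eD with hA hB
    subst hA; subst hB
    exact h1.succ
  | impL h1 h2 => exact LD.impL h1 (IH _ (Nat.lt_succ_self _) h2 eD)
  | impR h => exact absurd eD (by simp)
  | diaL hf h => exact LD.diaL hf (IH _ (Nat.lt_succ_self _) h eD)
  | diaR h => exact absurd eD (by simp)
  | boxR hf h => exact absurd eD (by simp)
  | boxL h => exact LD.boxL (IH _ (Nat.lt_succ_self _) h eD)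
  | dx w hax hf h => exact LD.dx w hax hf (IH _ (Nat.lt_succ_self _) h eD)
  | isx hax hc h => exact LD.isx hax hc (IH _ (Nat.lt_succ_self _) h eD)
  | cx h => exact LD.cx (IH _ (Nat.lt_succ_self _) h eD)

lemma LD.inv_andR2 : ∀ n {R : Multiset (Rel α.Char)} {Γ : Multiset (LF α.Char)} {v : ℕ}
    {D : Formula α.Char}, LD α 𝒜 n R Γ v D →
    ∀ {A B : Formula α.Char}, D = A.and B → LD α 𝒜 n R Γ v B := by
  intro n
  induction n using Nat.strong_induction_on with
  | _ n IH =>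
  intro R Γ v D h A B eD
  cases h with
  | id => exact absurd eD (by simp)
  | botL => exact LD.botL _ _ _ _ _ _
  | orL h1 h2 =>
    exact LD.orL (IH _ (Nat.lt_succ_self _) h1 eD) (IH _ (Nat.lt_succ_self _) h2 eD)
  | orR1 h => exact absurd eD (by simp)
  | orR2 h => exact absurd eD (by simp)
  | andL h => exact LD.andL (IH _ (Nat.lt_succ_self _) h eD)
  | andR h1 h2 =>
    injection eD with hA hB
    subst hA; subst hB
    exact h2.succ
  | impL h1 h2 => exact LD.impL h1 (IH _ (Nat.lt_succ_self _) h2 eD)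
  | impR h => exact absurd eD (by simp)
  | diaL hf h => exact LD.diaL hf (IH _ (Nat.lt_succ_self _) h eD)
  | diaR h => exact absurd eD (by simp)
  | boxR hf h => exact absurd eD (by simp)
  | boxL h => exact LD.boxL (IH _ (Nat.lt_succ_self _) h eD)
  | dx w hax hf h => exact LD.dx w hax hf (IH _ (Nat.lt_succ_self _) h eD)
  | isx hax hc h => exact LD.isx hax hc (IH _ (Nat.lt_succ_self _) h eD)
  | cx h => exact LD.cx (IH _ (Nat.lt_succ_self _) h eD)

/-- Height-preserving invertibility of the right implication rule. -/
lemma LD.inv_impR : ∀ n {R : Multiset (Rel α.Char)} {Γ : Multiset (LF α.Char)} {v : ℕ}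
    {D : Formula α.Char}, LD α 𝒜 n R Γ v D →
    ∀ {A B : Formula α.Char}, D = A.imp B → LD α 𝒜 n R ((v, A) ::ₘ Γ) v B := by
  intro n
  induction n using Nat.strong_induction_on with
  | _ n IH =>
  intro R Γ v D h A B eD
  cases h with
  | id => exact absurd eD (by simp)
  | botL =>
    rw [Multiset.cons_swap]; exact LD.botL _ _ _ _ _ _
  | orL h1 h2 =>
    have g1 := IH _ (Nat.lt_succ_self _) h1 eD
    have g2 := IH _ (Nat.lt_succ_self _) h2 eD
    rw [Multiset.cons_swap] at g1 g2
    rw [Multiset.cons_swap]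
    exact LD.orL g1 g2
  | orR1 h => exact absurd eD (by simp)
  | orR2 h => exact absurd eD (by simp)
  | andL h =>
    have g := IH _ (Nat.lt_succ_self _) h eD
    rw [← ms_rot] at g
    rw [Multiset.cons_swap]
    exact LD.andL g
  | andR h1 h2 => exact absurd eD (by simp)
  | impL h1 h2 =>
    have g1 := h1.weak1G (v, A)
    rw [Multiset.cons_swap] at g1
    have g2 := IH _ (Nat.lt_succ_self _) h2 eD
    rw [Multiset.cons_swap] at g2
    rw [Multiset.cons_swap]
    exact LD.impL g1 g2
  | impR h =>
    injection eD with hA hB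
    subst hA; subst hB
    exact h.succ
  | @diaL n' _ Γ' w₂ u₂ _ y A₂ _ hf h =>
    obtain ⟨huR, huw₂, huG, huv⟩ := freshIn_cons_destruct hf
    have g := IH _ (Nat.lt_succ_self _) h eD
    rw [Multiset.cons_swap] at g
    rw [Multiset.cons_swap]
    refine LD.diaL ⟨huR, ?_, huv⟩ g
    simp only [mem_lfLabels_cons, not_or]
    exact ⟨huw₂, huv, huG⟩
  | diaR h => exact absurd eD (by simp)
  | boxR hf h => exact absurd eD (by simp)
  | boxL h =>
    have g := IH _ (Nat.lt_succ_self _) h eD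
    rw [← ms_rot] at g
    rw [Multiset.cons_swap]
    exact LD.boxL g
  | dx w₂ hax hf h =>
    obtain ⟨huR, huG, huv⟩ := hf
    have g := IH _ (Nat.lt_succ_self _) h eD
    refine LD.dx w₂ hax ⟨huR, ?_, huv⟩ g
    simp only [mem_lfLabels_cons, not_or]
    exact ⟨huv, huG⟩
  | isx hax hc h => exact LD.isx hax hc (IH _ (Nat.lt_succ_self _) h eD)
  | cx h => exact LD.cx (IH _ (Nat.lt_succ_self _) h eD)

/-- A sequent proving `⊥` at any label proves anything. -/
lemma LD.exbot : ∀ n {R : Multiset (Rel α.Char)} {Γ : Multiset (LF α.Char)} {v : ℕ}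
    {D : Formula α.Char}, LD α 𝒜 n R Γ v D → D = Formula.bot →
    ∀ (u : ℕ) (B : Formula α.Char), LDeriv α 𝒜 R Γ u B := by
  intro n
  induction n using Nat.strong_induction_on with
  | _ n IH =>
  intro R Γ v D h eD u B
  cases h with
  | id => exact absurd eD (by simp)
  | botL => exact ⟨0, LD.botL _ _ _ _ _ _⟩
  | orL h1 h2 =>
    obtain ⟨k1, g1⟩ := IH _ (Nat.lt_succ_self _) h1 eD u B
    obtain ⟨k2, g2⟩ := IH _ (Nat.lt_succ_self _) h2 eD u B
    exact ⟨max k1 k2 + 1, LD.orL (g1.mono (le_max_left _ _)) (g2.mono (le_max_right _ _))⟩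
  | orR1 h => exact absurd eD (by simp)
  | orR2 h => exact absurd eD (by simp)
  | andL h =>
    obtain ⟨k, g⟩ := IH _ (Nat.lt_succ_self _) h eD u B
    exact ⟨k + 1, LD.andL g⟩
  | andR h1 h2 => exact absurd eD (by simp)
  | @impL n' _ _ w₂ _ A₂ B₂ _ h1 h2 =>
    obtain ⟨k, g⟩ := IH _ (Nat.lt_succ_self _) h2 eD u B
    exact ⟨max n' k + 1, LD.impL (h1.mono (le_max_left _ _)) (g.mono (le_max_right _ _))⟩
  | impR h => exact absurd eD (by simp)
  | @diaL n' _ Γ' w₂ u₂ _ y A₂ _ hf h =>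
    obtain ⟨huR, huw₂, huG, huv⟩ := freshIn_cons_destruct hf
    obtain ⟨t₂, k1, -, k3, -, k5⟩ :=
      exists_fresh R 0 ((w₂, Formula.dia y A₂) ::ₘ Γ') 0 [v, u]
    simp only [mem_lfLabels_cons, not_or] at k3
    have h1r := LD.sub n' u₂ t₂ h
    rw [subR_cons, subG_cons, subR_id huR, subG_id huG, subL_self,
      subL_ne (Ne.symm huw₂), subL_ne (Ne.symm huv)] at h1r
    obtain ⟨k, g⟩ := IH _ (Nat.lt_succ_self _) h1r eD u B
    refine ⟨k + 1, LD.diaL ⟨k1, ?_, k5 u (by simp)⟩ g⟩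
    simp only [mem_lfLabels_cons, not_or]
    exact ⟨k3.1, k3.2⟩
  | diaR h => exact absurd eD (by simp)
  | boxR hf h => exact absurd eD (by simp)
  | boxL h =>
    obtain ⟨k, g⟩ := IH _ (Nat.lt_succ_self _) h eD u B
    exact ⟨k + 1, LD.boxL g⟩
  | @dx n' _ _ u₂ _ y A₂ w₂ hax hf h =>
    obtain ⟨huR, huG, huv⟩ := hf
    obtain ⟨t₂, k1, -, k3, -, k5⟩ := exists_fresh R 0 Γ 0 [v, u]
    have h1r := LD.sub n' u₂ t₂ h
    rw [subR_cons, subR_id huR, subG_id huG, subL_self, subL_ne (Ne.symm huv)] at h1r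
    obtain ⟨k, g⟩ := IH _ (Nat.lt_succ_self _) h1r eD u B
    exact ⟨k + 1, LD.dx _ hax ⟨k1, k3, k5 u (by simp)⟩ g⟩
  | isx hax hc h =>
    obtain ⟨k, g⟩ := IH _ (Nat.lt_succ_self _) h eD u B
    exact ⟨k + 1, LD.isx hax hc g⟩
  | cx h =>
    obtain ⟨k, g⟩ := IH _ (Nat.lt_succ_self _) h eD u B
    exact ⟨k + 1, LD.cx g⟩


/-- Height-preserving invertibility of the right box rule. -/
lemma LD.inv_boxR : ∀ n {R : Multiset (Rel α.Char)} {Γ : Multiset (LF α.Char)} {v : ℕ}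
    {D : Formula α.Char}, LD α 𝒜 n R Γ v D →
    ∀ {x : α.Char} {A : Formula α.Char} {t : ℕ}, D = Formula.box x A →
      t ∉ relLabels R → t ∉ lfLabels Γ → t ≠ v →
      LD α 𝒜 n ((v, x, t) ::ₘ R) Γ t A := by
  intro n
  induction n using Nat.strong_induction_on with
  | _ n IH =>
  intro R Γ v D h x A t eD ht1 ht2 ht3
  cases h with
  | id => exact absurd eD (by simp)
  | botL => exact LD.botL _ _ _ _ _ _
  | orL h1 h2 =>
    simp only [mem_lfLabels_cons, not_or] at ht2
    have g1 := IH _ (Nat.lt_succ_self _) h1 eD ht1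
      (by simp only [mem_lfLabels_cons, not_or]; exact ⟨ht2.1, ht2.2⟩) ht3
    have g2 := IH _ (Nat.lt_succ_self _) h2 eD ht1
      (by simp only [mem_lfLabels_cons, not_or]; exact ⟨ht2.1, ht2.2⟩) ht3
    exact LD.orL g1 g2
  | orR1 h => exact absurd eD (by simp)
  | orR2 h => exact absurd eD (by simp)
  | andL h =>
    simp only [mem_lfLabels_cons, not_or] at ht2
    have g := IH _ (Nat.lt_succ_self _) h eD ht1
      (by simp only [mem_lfLabels_cons, not_or]; exact ⟨ht2.1, ht2.1, ht2.2⟩) ht3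
    exact LD.andL g
  | andR h1 h2 => exact absurd eD (by simp)
  | @impL n' _ _ w₂ _ A₂ B₂ _ h1 h2 =>
    simp only [mem_lfLabels_cons, not_or] at ht2
    have g1 := h1.weak1R (v, x, t)
    have g2 := IH _ (Nat.lt_succ_self _) h2 eD ht1
      (by simp only [mem_lfLabels_cons, not_or]; exact ⟨ht2.1, ht2.2⟩) ht3
    exact LD.impL g1 g2
  | impR h => exact absurd eD (by simp)
  | @diaL n' _ Γ' w₂ u₂ _ y A₂ _ hf h1 =>
    obtain ⟨huR, huw₂, huG, huv⟩ := freshIn_cons_destruct hf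
    simp only [mem_lfLabels_cons, not_or] at ht2
    obtain ⟨htw₂, htΓ'⟩ := ht2
    obtain ⟨t₂, k1, -, k3, -, k5⟩ :=
      exists_fresh R 0 ((w₂, Formula.dia y A₂) ::ₘ Γ') 0 [v, t]
    simp only [mem_lfLabels_cons, not_or] at k3
    have h1r := LD.sub n' u₂ t₂ h1
    rw [subR_cons, subG_cons, subR_id huR, subG_id huG, subL_self,
      subL_ne (Ne.symm huw₂), subL_ne (Ne.symm huv)] at h1r
    have g := IH _ (Nat.lt_succ_self _) h1r eD
      (by simp only [mem_relLabels_cons, not_or]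
          exact ⟨htw₂, fun hh => (k5 t (by simp)) hh.symm, ht1⟩)
      (by simp only [mem_lfLabels_cons, not_or]
          exact ⟨fun hh => (k5 t (by simp)) hh.symm, htΓ'⟩) ht3
    rw [Multiset.cons_swap] at g
    refine LD.diaL ⟨?_, ?_, k5 t (by simp)⟩ g
    · simp only [mem_relLabels_cons, not_or]
      exact ⟨k5 v (by simp), k5 t (by simp), k1⟩
    · simp only [mem_lfLabels_cons, not_or]
      exact ⟨k3.1, k3.2⟩
  | diaR h => exact absurd eD (by simp)
  | @boxR n' _ _ _ u₂ y A₂ hf h1 =>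
    injection eD with hx hA
    subst hx; subst hA
    obtain ⟨huR, huG, huv⟩ := hf
    have h1r := LD.sub n' u₂ t h1
    rw [subR_cons, subR_id huR, subG_id huG, subL_self, subL_ne (Ne.symm huv)] at h1r
    exact h1r.succ
  | @boxL n' _ Γ' w₂ u₂ _ y A₂ _ h1 =>
    simp only [mem_relLabels_cons, not_or] at ht1
    simp only [mem_lfLabels_cons, not_or] at ht2
    have g := IH _ (Nat.lt_succ_self _) h1 eD
      (by simp only [mem_relLabels_cons, not_or]; exact ht1)
      (by simp only [mem_lfLabels_cons, not_or]
          exact ⟨ht2.1, ht1.2.1, ht2.2⟩) ht3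
    rw [Multiset.cons_swap] at g
    have g2 := LD.boxL g
    rwa [Multiset.cons_swap] at g2
  | @dx n' _ _ u₂ _ y A₂ w₂ hax hf h1 =>
    obtain ⟨huR, huG, huv⟩ := hf
    obtain ⟨t₂, k1, -, k3, -, k5⟩ := exists_fresh R 0 Γ 0 [v, t]
    have h1r := LD.sub n' u₂ t₂ h1
    rw [subR_cons, subR_id huR, subG_id huG, subL_self, subL_ne (Ne.symm huv)] at h1r
    have hex : ∃ W, W ≠ t ∧ LD α 𝒜 n' ((W, y, t₂) ::ₘ R) Γ v D := by
      by_cases hW : subL u₂ t₂ w₂ = t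
      · obtain ⟨t₃, m1, -, m3, -, m5⟩ := exists_fresh R 0 Γ 0 [v, t, t₂]
        have h1rr := LD.sub n' t t₃ h1r
        rw [hW, subR_cons, subR_id ht1, subG_id ht2, subL_self, subL_ne (Ne.symm ht3),
          subL_ne (fun hh => (k5 t (by simp)) hh)] at h1rr
        exact ⟨t₃, fun hh => (m5 t (by simp)) hh, h1rr⟩
      · exact ⟨_, hW, h1r⟩
    obtain ⟨W, hWt, h1f⟩ := hex
    have g := IH _ (Nat.lt_succ_self _) h1f eD
      (by simp only [mem_relLabels_cons, not_or]
          exact ⟨fun hh => hWt hh.symm, fun hh => (k5 t (by simp)) hh.symm, ht1⟩)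
      ht2 ht3
    rw [Multiset.cons_swap] at g
    refine LD.dx W hax ⟨?_, k3, k5 t (by simp)⟩ g
    simp only [mem_relLabels_cons, not_or]
    exact ⟨k5 v (by simp), k5 t (by simp), k1⟩
  | @isx n' R₀ _ w₀ u₀ _ s y m A₂ hax hc h1 =>
    cases s with
    | nil =>
      cases hc with
      | nil =>
        rw [zero_add] at h1 ht1 ⊢
        have hex : ∃ W, W ≠ t ∧ LD α 𝒜 n' ((W, y, W) ::ₘ R₀) Γ v D := by
          by_cases hW : w₀ = t
          · rw [hW] at h1
            obtain ⟨t₃, m1, -, m3, -, m5⟩ := exists_fresh R₀ 0 Γ 0 [v, t]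
            have h1rr := LD.sub n' t t₃ h1
            rw [subR_cons, subR_id ht1, subG_id ht2, subL_self,
              subL_ne (Ne.symm ht3)] at h1rr
            exact ⟨t₃, fun hh => (m5 t (by simp)) hh, h1rr⟩
          · exact ⟨w₀, hW, h1⟩
        obtain ⟨W, hWt, h1f⟩ := hex
        have g := IH _ (Nat.lt_succ_self _) h1f eD
          (by simp only [mem_relLabels_cons, not_or]
              exact ⟨fun hh => hWt hh.symm, fun hh => hWt hh.symm, ht1⟩)
          ht2 ht3
        have g' : LD α 𝒜 n' ((W, y, W) ::ₘ (0 + ((v, x, t) ::ₘ R₀))) Γ t A := by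
          rw [zero_add, ← Multiset.cons_swap]
          exact g
        have := LD.isx hax (Chain.nil W) g'
        rwa [zero_add] at this
    | cons z s' =>
      obtain ⟨hw₀, hu₀⟩ := hc.mem_labels
      have hw₀' : w₀ ∈ relLabels (m + R₀) := by
        rw [mem_relLabels_add]; exact Or.inl hw₀
      have hu₀' : u₀ ∈ relLabels (m + R₀) := by
        rw [mem_relLabels_add]; exact Or.inl hu₀
      have g := IH _ (Nat.lt_succ_self _) h1 eD
        (by simp only [mem_relLabels_cons, not_or]
            exact ⟨fun hh => ht1 (hh ▸ hw₀'), fun hh => ht1 (hh ▸ hu₀'), ht1⟩)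
        ht2 ht3
      have g' : LD α 𝒜 n' ((w₀, y, u₀) ::ₘ (m + ((v, x, t) ::ₘ R₀))) Γ t A := by
        rw [Multiset.add_cons, ← Multiset.cons_swap]
        exact g
      have := LD.isx hax hc g'
      rwa [Multiset.add_cons] at this
  | @cx n' _ _ w₂ u₂ _ y A₂ h1 =>
    simp only [mem_relLabels_cons, not_or] at ht1
    have g := IH _ (Nat.lt_succ_self _) h1 eD
      (by simp only [mem_relLabels_cons, not_or]
          exact ⟨ht1.1, ht1.2.1, ht1.2.1, ht1.1, ht1.2.2⟩)
      ht2 ht3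
    rw [← ms_rot] at g
    have g2 := LD.cx g
    rwa [Multiset.cons_swap] at g2


lemma LDeriv.weak1R {R : Multiset (Rel α.Char)} {Γ : Multiset (LF α.Char)} {v : ℕ}
    {C : Formula α.Char} (h : LDeriv α 𝒜 R Γ v C) (a : Rel α.Char) :
    LDeriv α 𝒜 (a ::ₘ R) Γ v C := by
  obtain ⟨n, h⟩ := h; exact ⟨n, h.weak1R a⟩

lemma LDeriv.weak1G {R : Multiset (Rel α.Char)} {Γ : Multiset (LF α.Char)} {v : ℕ}
    {C : Formula α.Char} (h : LDeriv α 𝒜 R Γ v C) (b : LF α.Char) :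
    LDeriv α 𝒜 R (b ::ₘ Γ) v C := by
  obtain ⟨n, h⟩ := h; exact ⟨n, h.weak1G b⟩

lemma LDeriv.sub {R : Multiset (Rel α.Char)} {Γ : Multiset (LF α.Char)} {v : ℕ}
    {C : Formula α.Char} (a b : ℕ) (h : LDeriv α 𝒜 R Γ v C) :
    LDeriv α 𝒜 (subR a b R) (subG a b Γ) (subL a b v) C := by
  obtain ⟨n, h⟩ := h; exact ⟨n, LD.sub n a b h⟩

lemma LDeriv.relCtr {R : Multiset (Rel α.Char)} {Γ : Multiset (LF α.Char)} {v : ℕ}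
    {C : Formula α.Char} {p q : ℕ} {y : α.Char}
    (h : LDeriv α 𝒜 ((p, y, q) ::ₘ (p, y, q) ::ₘ R) Γ v C) :
    LDeriv α 𝒜 ((p, y, q) ::ₘ R) Γ v C := by
  obtain ⟨n, h⟩ := h; exact h.relCtr

lemma LDeriv.inv_or1 {R : Multiset (Rel α.Char)} {Γ0 : Multiset (LF α.Char)} {v w : ℕ}
    {A B C : Formula α.Char} (h : LDeriv α 𝒜 R ((w, A.or B) ::ₘ Γ0) v C) :
    LDeriv α 𝒜 R ((w, A) ::ₘ Γ0) v C := by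
  obtain ⟨n, h⟩ := h; exact ⟨n, LD.inv_or1 n h rfl⟩

lemma LDeriv.inv_or2 {R : Multiset (Rel α.Char)} {Γ0 : Multiset (LF α.Char)} {v w : ℕ}
    {A B C : Formula α.Char} (h : LDeriv α 𝒜 R ((w, A.or B) ::ₘ Γ0) v C) :
    LDeriv α 𝒜 R ((w, B) ::ₘ Γ0) v C := by
  obtain ⟨n, h⟩ := h; exact ⟨n, LD.inv_or2 n h rfl⟩

lemma LDeriv.inv_and {R : Multiset (Rel α.Char)} {Γ0 : Multiset (LF α.Char)} {v w : ℕ}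
    {A B C : Formula α.Char} (h : LDeriv α 𝒜 R ((w, A.and B) ::ₘ Γ0) v C) :
    LDeriv α 𝒜 R ((w, A) ::ₘ (w, B) ::ₘ Γ0) v C := by
  obtain ⟨n, h⟩ := h; exact ⟨n, LD.inv_and n h rfl⟩

lemma LDeriv.inv_impl {R : Multiset (Rel α.Char)} {Γ0 : Multiset (LF α.Char)} {v w : ℕ}
    {A B C : Formula α.Char} (h : LDeriv α 𝒜 R ((w, A.imp B) ::ₘ Γ0) v C) :
    LDeriv α 𝒜 R ((w, B) ::ₘ Γ0) v C := by
  obtain ⟨n, h⟩ := h; exact ⟨n, LD.inv_impl n h rfl⟩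

lemma LDeriv.inv_dia {R : Multiset (Rel α.Char)} {Γ0 : Multiset (LF α.Char)} {v w : ℕ}
    {x : α.Char} {A C : Formula α.Char}
    (h : LDeriv α 𝒜 R ((w, Formula.dia x A) ::ₘ Γ0) v C) {t : ℕ}
    (h1 : t ∉ relLabels R) (h2 : t ∉ lfLabels Γ0) (h3 : t ≠ v) (h4 : t ≠ w) :
    LDeriv α 𝒜 ((w, x, t) ::ₘ R) ((t, A) ::ₘ Γ0) v C := by
  obtain ⟨n, h⟩ := h; exact ⟨n, LD.inv_dia n h rfl h1 h2 h3 h4⟩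

/-- Cut admissibility at a fixed cut formula. -/
def CutHyp (α : Alphabet) (𝒜 : Set (Ax α.Char)) (A : Formula α.Char) : Prop :=
  ∀ (R : Multiset (Rel α.Char)) (Γ : Multiset (LF α.Char)) (w u : ℕ) (B : Formula α.Char),
    LDeriv α 𝒜 R Γ w A → LDeriv α 𝒜 R ((w, A) ::ₘ Γ) u B → LDeriv α 𝒜 R Γ u B

/-- Left analysis for a disjunctive cut formula. -/
lemma orLeft {A1 A2 : Formula α.Char} (hc1 : CutHyp α 𝒜 A1) (hc2 : CutHyp α 𝒜 A2) :
    ∀ n {R : Multiset (Rel α.Char)} {Γ : Multiset (LF α.Char)} {w : ℕ} {D : Formula α.Char}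
      {u : ℕ} {B : Formula α.Char}, LD α 𝒜 n R Γ w D → D = A1.or A2 →
      LDeriv α 𝒜 R ((w, A1) ::ₘ Γ) u B → LDeriv α 𝒜 R ((w, A2) ::ₘ Γ) u B →
      LDeriv α 𝒜 R Γ u B := by
  intro n
  induction n using Nat.strong_induction_on with
  | _ n IH =>
  intro R Γ w D u B h eD q1 q2
  cases h with
  | id => exact absurd eD (by simp)
  | botL => exact ⟨0, LD.botL _ _ _ _ _ _⟩
  | @orL n' _ Γ' w₂ _ C₂ D₂ _ h1 h2 =>
    have q1a : LDeriv α 𝒜 R ((w, A1) ::ₘ (w₂, C₂) ::ₘ Γ') u B := by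
      have := (Multiset.cons_swap (w, A1) (w₂, C₂.or D₂) Γ' ▸ q1).inv_or1
      rwa [Multiset.cons_swap] at this
    have q2a : LDeriv α 𝒜 R ((w, A2) ::ₘ (w₂, C₂) ::ₘ Γ') u B := by
      have := (Multiset.cons_swap (w, A2) (w₂, C₂.or D₂) Γ' ▸ q2).inv_or1
      rwa [Multiset.cons_swap] at this
    have q1b : LDeriv α 𝒜 R ((w, A1) ::ₘ (w₂, D₂) ::ₘ Γ') u B := by
      have := (Multiset.cons_swap (w, A1) (w₂, C₂.or D₂) Γ' ▸ q1).inv_or2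
      rwa [Multiset.cons_swap] at this
    have q2b : LDeriv α 𝒜 R ((w, A2) ::ₘ (w₂, D₂) ::ₘ Γ') u B := by
      have := (Multiset.cons_swap (w, A2) (w₂, C₂.or D₂) Γ' ▸ q2).inv_or2
      rwa [Multiset.cons_swap] at this
    obtain ⟨k1, g1⟩ := IH _ (Nat.lt_succ_self _) h1 eD q1a q2a
    obtain ⟨k2, g2⟩ := IH _ (Nat.lt_succ_self _) h2 eD q1b q2b
    exact ⟨max k1 k2 + 1, LD.orL (g1.mono (le_max_left _ _)) (g2.mono (le_max_right _ _))⟩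
  | orR1 h =>
    injection eD with e1 e2; subst e1; subst e2
    exact hc1 _ _ _ _ _ ⟨_, h⟩ q1
  | orR2 h =>
    injection eD with e1 e2; subst e1; subst e2
    exact hc2 _ _ _ _ _ ⟨_, h⟩ q2
  | @andL n' _ Γ' w₂ _ C₂ D₂ _ h1 =>
    have q1a : LDeriv α 𝒜 R ((w, A1) ::ₘ (w₂, C₂) ::ₘ (w₂, D₂) ::ₘ Γ') u B := by
      have := (Multiset.cons_swap (w, A1) (w₂, C₂.and D₂) Γ' ▸ q1).inv_and
      rwa [ms_rot] at this
    have q2a : LDeriv α 𝒜 R ((w, A2) ::ₘ (w₂, C₂) ::ₘ (w₂, D₂) ::ₘ Γ') u B := by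
      have := (Multiset.cons_swap (w, A2) (w₂, C₂.and D₂) Γ' ▸ q2).inv_and
      rwa [ms_rot] at this
    obtain ⟨k, g⟩ := IH _ (Nat.lt_succ_self _) h1 eD q1a q2a
    exact ⟨k + 1, LD.andL g⟩
  | @impL n' _ Γ' w₂ _ C₂ D₂ _ h1 h2 =>
    have q1a : LDeriv α 𝒜 R ((w, A1) ::ₘ (w₂, D₂) ::ₘ Γ') u B := by
      have := (Multiset.cons_swap (w, A1) (w₂, C₂.imp D₂) Γ' ▸ q1).inv_impl
      rwa [Multiset.cons_swap] at this
    have q2a : LDeriv α 𝒜 R ((w, A2) ::ₘ (w₂, D₂) ::ₘ Γ') u B := by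
      have := (Multiset.cons_swap (w, A2) (w₂, C₂.imp D₂) Γ' ▸ q2).inv_impl
      rwa [Multiset.cons_swap] at this
    obtain ⟨k, g⟩ := IH _ (Nat.lt_succ_self _) h2 eD q1a q2a
    exact ⟨max n' k + 1, LD.impL (h1.mono (le_max_left _ _)) (g.mono (le_max_right _ _))⟩
  | impR h => exact absurd eD (by simp)
  | andR h1 h2 => exact absurd eD (by simp)
  | @diaL n' _ Γ' w₂ u₂ _ y C₂ _ hf h1 =>
    obtain ⟨huR, huw₂, huG, huw⟩ := freshIn_cons_destruct hf
    obtain ⟨t₂, k1, -, k3, -, k5⟩ :=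
      exists_fresh R 0 ((w₂, Formula.dia y C₂) ::ₘ Γ') 0 [w, u]
    simp only [mem_lfLabels_cons, not_or] at k3
    have h1r := LD.sub n' u₂ t₂ h1
    rw [subR_cons, subG_cons, subR_id huR, subG_id huG, subL_self,
      subL_ne (Ne.symm huw₂), subL_ne (Ne.symm huw)] at h1r
    have q1a : LDeriv α 𝒜 ((w₂, y, t₂) ::ₘ R) ((w, A1) ::ₘ (t₂, C₂) ::ₘ Γ') u B := by
      have := (Multiset.cons_swap (w, A1) (w₂, Formula.dia y C₂) Γ' ▸ q1).inv_dia
        (t := t₂) k1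
        (by simp only [mem_lfLabels_cons, not_or]; exact ⟨k5 w (by simp), k3.2⟩)
        (k5 u (by simp)) k3.1
      rwa [Multiset.cons_swap] at this
    have q2a : LDeriv α 𝒜 ((w₂, y, t₂) ::ₘ R) ((w, A2) ::ₘ (t₂, C₂) ::ₘ Γ') u B := by
      have := (Multiset.cons_swap (w, A2) (w₂, Formula.dia y C₂) Γ' ▸ q2).inv_dia
        (t := t₂) k1
        (by simp only [mem_lfLabels_cons, not_or]; exact ⟨k5 w (by simp), k3.2⟩)
        (k5 u (by simp)) k3.1
      rwa [Multiset.cons_swap] at this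
    obtain ⟨k, g⟩ := IH _ (Nat.lt_succ_self _) h1r eD q1a q2a
    refine ⟨k + 1, LD.diaL ⟨k1, ?_, k5 u (by simp)⟩ g⟩
    simp only [mem_lfLabels_cons, not_or]
    exact ⟨k3.1, k3.2⟩
  | diaR h => exact absurd eD (by simp)
  | boxR hf h => exact absurd eD (by simp)
  | @boxL n' R₀ Γ' w₂ u₂ _ y C₂ _ h1 =>
    have q1a : LDeriv α 𝒜 ((w₂, y, u₂) ::ₘ R₀) ((w, A1) ::ₘ (w₂, Formula.box y C₂) ::ₘ
        (u₂, C₂) ::ₘ Γ') u B := by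
      have := q1.weak1G (u₂, C₂)
      rwa [← ms_rot] at this
    have q2a : LDeriv α 𝒜 ((w₂, y, u₂) ::ₘ R₀) ((w, A2) ::ₘ (w₂, Formula.box y C₂) ::ₘ
        (u₂, C₂) ::ₘ Γ') u B := by
      have := q2.weak1G (u₂, C₂)
      rwa [← ms_rot] at this
    obtain ⟨k, g⟩ := IH _ (Nat.lt_succ_self _) h1 eD q1a q2a
    exact ⟨k + 1, LD.boxL g⟩
  | @dx n' _ _ u₂ _ y _ w₂ hax hf h1 =>
    obtain ⟨huR, huG, huw⟩ := hf
    obtain ⟨t₂, k1, -, k3, -, k5⟩ := exists_fresh R 0 Γ 0 [u, w]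
    have h1r := LD.sub n' u₂ t₂ h1
    rw [subR_cons, subR_id huR, subG_id huG, subL_self, subL_ne (Ne.symm huw)] at h1r
    obtain ⟨k, g⟩ := IH _ (Nat.lt_succ_self _) h1r eD
      (q1.weak1R (subL u₂ t₂ w₂, y, t₂)) (q2.weak1R (subL u₂ t₂ w₂, y, t₂))
    exact ⟨k + 1, LD.dx _ hax ⟨k1, k3, k5 u (by simp)⟩ g⟩
  | @isx n' R₀ _ w₀ u₀ _ s y m _ hax hc h1 =>
    obtain ⟨k, g⟩ := IH _ (Nat.lt_succ_self _) h1 eD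
      (q1.weak1R (w₀, y, u₀)) (q2.weak1R (w₀, y, u₀))
    exact ⟨k + 1, LD.isx hax hc g⟩
  | @cx n' R₀ _ w₂ u₂ _ y _ h1 =>
    have q1a := q1.weak1R (u₂, α.conv y, w₂)
    have q2a := q2.weak1R (u₂, α.conv y, w₂)
    rw [Multiset.cons_swap] at q1a q2a
    obtain ⟨k, g⟩ := IH _ (Nat.lt_succ_self _) h1 eD q1a q2a
    exact ⟨k + 1, LD.cx g⟩


/-- Left analysis for a diamond cut formula. -/
lemma diaLeft {x : α.Char} {A1 : Formula α.Char} (hc : CutHyp α 𝒜 A1) :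
    ∀ n {R : Multiset (Rel α.Char)} {Γ : Multiset (LF α.Char)} {w : ℕ} {D : Formula α.Char}
      {u : ℕ} {B : Formula α.Char}, LD α 𝒜 n R Γ w D → D = Formula.dia x A1 →
      (∀ t, LDeriv α 𝒜 ((w, x, t) ::ₘ R) ((t, A1) ::ₘ Γ) u B) →
      LDeriv α 𝒜 R Γ u B := by
  intro n
  induction n using Nat.strong_induction_on with
  | _ n IH =>
  intro R Γ w D u B h eD q
  cases h with
  | id => exact absurd eD (by simp)
  | botL => exact ⟨0, LD.botL _ _ _ _ _ _⟩
  | @orL n' _ Γ' w₂ _ C₂ D₂ _ h1 h2 =>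
    have qa : ∀ t, LDeriv α 𝒜 ((w, x, t) ::ₘ R) ((t, A1) ::ₘ (w₂, C₂) ::ₘ Γ') u B := by
      intro t
      have := (Multiset.cons_swap (t, A1) (w₂, C₂.or D₂) Γ' ▸ (q t)).inv_or1
      rwa [Multiset.cons_swap] at this
    have qb : ∀ t, LDeriv α 𝒜 ((w, x, t) ::ₘ R) ((t, A1) ::ₘ (w₂, D₂) ::ₘ Γ') u B := by
      intro t
      have := (Multiset.cons_swap (t, A1) (w₂, C₂.or D₂) Γ' ▸ (q t)).inv_or2
      rwa [Multiset.cons_swap] at this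
    obtain ⟨k1, g1⟩ := IH _ (Nat.lt_succ_self _) h1 eD qa
    obtain ⟨k2, g2⟩ := IH _ (Nat.lt_succ_self _) h2 eD qb
    exact ⟨max k1 k2 + 1, LD.orL (g1.mono (le_max_left _ _)) (g2.mono (le_max_right _ _))⟩
  | @andL n' _ Γ' w₂ _ C₂ D₂ _ h1 =>
    have qa : ∀ t, LDeriv α 𝒜 ((w, x, t) ::ₘ R) ((t, A1) ::ₘ (w₂, C₂) ::ₘ (w₂, D₂) ::ₘ Γ')
        u B := by
      intro t
      have := (Multiset.cons_swap (t, A1) (w₂, C₂.and D₂) Γ' ▸ (q t)).inv_and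
      rwa [ms_rot] at this
    obtain ⟨k, g⟩ := IH _ (Nat.lt_succ_self _) h1 eD qa
    exact ⟨k + 1, LD.andL g⟩
  | @impL n' _ Γ' w₂ _ C₂ D₂ _ h1 h2 =>
    have qa : ∀ t, LDeriv α 𝒜 ((w, x, t) ::ₘ R) ((t, A1) ::ₘ (w₂, D₂) ::ₘ Γ') u B := by
      intro t
      have := (Multiset.cons_swap (t, A1) (w₂, C₂.imp D₂) Γ' ▸ (q t)).inv_impl
      rwa [Multiset.cons_swap] at this
    obtain ⟨k, g⟩ := IH _ (Nat.lt_succ_self _) h2 eD qa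
    exact ⟨max n' k + 1, LD.impL (h1.mono (le_max_left _ _)) (g.mono (le_max_right _ _))⟩
  | impR h => exact absurd eD (by simp)
  | andR h1 h2 => exact absurd eD (by simp)
  | orR1 h => exact absurd eD (by simp)
  | orR2 h => exact absurd eD (by simp)
  | boxR hf h => exact absurd eD (by simp)
  | @diaR n' R₀ _ _ u₀ x₂ A₂ h1 =>
    injection eD with hx hA
    subst hx; subst hA
    have qq := (q u₀).relCtr
    exact hc _ _ _ _ _ ⟨n', h1⟩ qq
  | @diaL n' _ Γ' w₂ u₂ _ y C₂ _ hf h1 =>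
    obtain ⟨huR, huw₂, huG, huw⟩ := freshIn_cons_destruct hf
    obtain ⟨t₂, k1, -, k3, -, k5⟩ :=
      exists_fresh R 0 ((w₂, Formula.dia y C₂) ::ₘ Γ') 0 [w, u]
    simp only [mem_lfLabels_cons, not_or] at k3
    have h1r := LD.sub n' u₂ t₂ h1
    rw [subR_cons, subG_cons, subR_id huR, subG_id huG, subL_self,
      subL_ne (Ne.symm huw₂), subL_ne (Ne.symm huw)] at h1r
    have q' : ∀ t, LDeriv α 𝒜 ((w, x, t) ::ₘ (w₂, y, t₂) ::ₘ R)
        ((t, A1) ::ₘ (t₂, C₂) ::ₘ Γ') u B := by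
      intro t
      obtain ⟨t₄, m1, -, m3, -, m5⟩ :=
        exists_fresh ((w, x, t) ::ₘ R) 0 ((t, A1) ::ₘ Γ') 0 [u, w₂, t₂, w, t]
      simp only [mem_relLabels_cons, not_or] at m1
      simp only [mem_lfLabels_cons, not_or] at m3
      have step := (Multiset.cons_swap (t, A1) (w₂, Formula.dia y C₂) Γ' ▸ (q t)).inv_dia
        (t := t₄)
        (by simp only [mem_relLabels_cons, not_or]; exact ⟨m1.1, m1.2.1, m1.2.2⟩)
        (by simp only [mem_lfLabels_cons, not_or]; exact ⟨m3.1, m3.2⟩)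
        (m5 u (by simp)) (m5 w₂ (by simp))
      have step2 := LDeriv.sub t₄ t₂ step
      rw [subR_cons, subR_cons, subG_cons, subG_cons,
        subR_id (m1.2.2 : t₄ ∉ relLabels R),
        subG_id (m3.2 : t₄ ∉ lfLabels Γ'), subL_self,
        subL_ne (Ne.symm (m5 w₂ (by simp))), subL_ne (Ne.symm (m5 w (by simp))),
        subL_ne (Ne.symm (m5 t (by simp))), subL_ne (Ne.symm (m5 u (by simp)))] at step2
      rwa [Multiset.cons_swap ((w₂, y, t₂) : Rel α.Char),
        Multiset.cons_swap ((t₂, C₂) : LF α.Char)] at step2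
    obtain ⟨k, g⟩ := IH _ (Nat.lt_succ_self _) h1r eD q'
    refine ⟨k + 1, LD.diaL ⟨k1, ?_, k5 u (by simp)⟩ g⟩
    simp only [mem_lfLabels_cons, not_or]
    exact ⟨k3.1, k3.2⟩
  | @boxL n' R₀ Γ' w₂ u₂ _ y C₂ _ h1 =>
    have q' : ∀ t, LDeriv α 𝒜 ((w, x, t) ::ₘ (w₂, y, u₂) ::ₘ R₀)
        ((t, A1) ::ₘ (w₂, Formula.box y C₂) ::ₘ (u₂, C₂) ::ₘ Γ') u B := by
      intro t
      have := (q t).weak1G (u₂, C₂)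
      rwa [← ms_rot] at this
    obtain ⟨k, g⟩ := IH _ (Nat.lt_succ_self _) h1 eD q'
    exact ⟨k + 1, LD.boxL g⟩
  | @dx n' _ _ u₂ _ y _ w₂ hax hf h1 =>
    obtain ⟨huR, huG, huw⟩ := hf
    obtain ⟨t₂, k1, -, k3, -, k5⟩ := exists_fresh R 0 Γ 0 [u, w]
    have h1r := LD.sub n' u₂ t₂ h1
    rw [subR_cons, subR_id huR, subG_id huG, subL_self, subL_ne (Ne.symm huw)] at h1r
    have q' : ∀ t, LDeriv α 𝒜 ((w, x, t) ::ₘ (subL u₂ t₂ w₂, y, t₂) ::ₘ R)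
        ((t, A1) ::ₘ Γ) u B := by
      intro t
      have := (q t).weak1R (subL u₂ t₂ w₂, y, t₂)
      rwa [Multiset.cons_swap] at this
    obtain ⟨k, g⟩ := IH _ (Nat.lt_succ_self _) h1r eD q'
    exact ⟨k + 1, LD.dx _ hax ⟨k1, k3, k5 u (by simp)⟩ g⟩
  | @isx n' R₀ _ w₀ u₀ _ s y m _ hax hc' h1 =>
    have q' : ∀ t, LDeriv α 𝒜 ((w, x, t) ::ₘ (w₀, y, u₀) ::ₘ (m + R₀))
        ((t, A1) ::ₘ Γ) u B := by
      intro t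
      have := (q t).weak1R (w₀, y, u₀)
      rwa [Multiset.cons_swap] at this
    obtain ⟨k, g⟩ := IH _ (Nat.lt_succ_self _) h1 eD q'
    exact ⟨k + 1, LD.isx hax hc' g⟩
  | @cx n' R₀ _ w₂ u₂ _ y _ h1 =>
    have q' : ∀ t, LDeriv α 𝒜 ((w, x, t) ::ₘ (w₂, y, u₂) ::ₘ (u₂, α.conv y, w₂) ::ₘ R₀)
        ((t, A1) ::ₘ Γ) u B := by
      intro t
      have := (q t).weak1R (u₂, α.conv y, w₂)
      rwa [← ms_rot] at this
    obtain ⟨k, g⟩ := IH _ (Nat.lt_succ_self _) h1 eD q'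
    exact ⟨k + 1, LD.cx g⟩


/-- Additive cut elimination, by induction on the size of the cut formula with
subinduction on the sum of the heights. -/
lemma cutA : ∀ (k : ℕ) (A : Formula α.Char), A.size ≤ k →
    ∀ (N n1 n2 : ℕ), n1 + n2 ≤ N → ∀ {R : Multiset (Rel α.Char)}
      {Γ : Multiset (LF α.Char)} {w u : ℕ} {B : Formula α.Char},
      LD α 𝒜 n1 R Γ w A → LD α 𝒜 n2 R ((w, A) ::ₘ Γ) u B → LDeriv α 𝒜 R Γ u B := by
  intro k
  induction k using Nat.strong_induction_on with
  | _ k IHk =>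
  intro A hA N
  induction N using Nat.strong_induction_on with
  | _ N IHN =>
  intro n1 n2 hN R Γ w u B d1 d2
  have cutS : ∀ A' : Formula α.Char, A'.size < A.size → CutHyp α 𝒜 A' := by
    intro A' hlt R' Γ' w' u' B' e1 e2
    obtain ⟨m1, e1⟩ := e1
    obtain ⟨m2, e2⟩ := e2
    exact IHk A'.size (lt_of_lt_of_le hlt hA) A' le_rfl (m1 + m2) m1 m2 le_rfl e1 e2
  have cutH : ∀ n1' n2', n1' + n2' < n1 + n2 → ∀ {R' : Multiset (Rel α.Char)}
      {Γ' : Multiset (LF α.Char)} {w' u' : ℕ} {B' : Formula α.Char},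
      LD α 𝒜 n1' R' Γ' w' A → LD α 𝒜 n2' R' ((w', A) ::ₘ Γ') u' B' →
      LDeriv α 𝒜 R' Γ' u' B' := by
    intro n1' n2' hlt R' Γ' w' u' B' e1 e2
    exact IHN (n1' + n2') (lt_of_lt_of_le hlt hN) n1' n2' le_rfl e1 e2
  generalize eΔ : ((w, A) ::ₘ Γ) = Δ at d2
  cases d2 with
  | id n₂ R₂ Γ₂ w₂ p =>
    rcases cons_eq_cons' eΔ with ⟨h1, h2⟩ | ⟨Δ', h1, h2⟩
    · injection h1 with hw hA'
      subst hw; subst hA'; subst h2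
      exact ⟨n1, d1⟩
    · rw [h1]
      exact ⟨0, LD.id _ _ _ _ _⟩
  | botL n₂ R₂ Γ₂ w₂ u₂ B₂ =>
    rcases cons_eq_cons' eΔ with ⟨h1, h2⟩ | ⟨Δ', h1, h2⟩
    · injection h1 with hw hA'
      subst hw; subst hA'; subst h2
      exact LD.exbot n1 d1 rfl _ _
    · rw [h1]
      exact ⟨0, LD.botL _ _ _ _ _ _⟩
  | @orL n₂' _ Γ₂ w₂ _ C₂ D₂ _ p1 p2 =>
    rcases cons_eq_cons' eΔ with ⟨h1, h2⟩ | ⟨Δ', h1, h2⟩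
    · injection h1 with hw hA'
      subst hw; subst hA'; subst h2
      have hC : C₂.size < (C₂.or D₂).size := by simp [Formula.size]
      have hD : D₂.size < (C₂.or D₂).size := by simp [Formula.size]
      exact orLeft (cutS C₂ hC) (cutS D₂ hD) n1 d1 rfl ⟨n₂', p1⟩ ⟨n₂', p2⟩
    · subst h2
      rw [Multiset.cons_swap] at p1 p2
      have d1a := LD.inv_or1 n1 d1 h1
      have d1b := LD.inv_or2 n1 d1 h1
      obtain ⟨k1, g1⟩ := cutH n1 n₂' (by omega) d1a p1
      obtain ⟨k2, g2⟩ := cutH n1 n₂' (by omega) d1b p2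
      rw [h1]
      exact ⟨max k1 k2 + 1,
        LD.orL (g1.mono (le_max_left _ _)) (g2.mono (le_max_right _ _))⟩
  | @orR1 n₂' _ _ _ B1 B2 p =>
    subst eΔ
    obtain ⟨k, g⟩ := cutH n1 n₂' (by omega) d1 p
    exact ⟨k + 1, LD.orR1 g⟩
  | @orR2 n₂' _ _ _ B1 B2 p =>
    subst eΔ
    obtain ⟨k, g⟩ := cutH n1 n₂' (by omega) d1 p
    exact ⟨k + 1, LD.orR2 g⟩
  | @andL n₂' _ Γ₂ w₂ _ C₂ D₂ _ p =>
    rcases cons_eq_cons' eΔ with ⟨h1, h2⟩ | ⟨Δ', h1, h2⟩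
    · injection h1 with hw hA'
      subst hw; subst hA'; subst h2
      have hC : C₂.size < (C₂.and D₂).size := by simp [Formula.size]
      have hD : D₂.size < (C₂.and D₂).size := by simp [Formula.size]
      have e1 := LD.inv_andR1 n1 d1 rfl
      have e2 := LD.inv_andR2 n1 d1 rfl
      rw [Multiset.cons_swap] at p
      have g1 := cutS D₂ hD _ _ _ _ _ ⟨n1, e2.weak1G (w, C₂)⟩ ⟨n₂', p⟩
      exact cutS C₂ hC _ _ _ _ _ ⟨n1, e1⟩ g1
    · subst h2
      rw [ms_rot] at p
      have d1' := LD.inv_and n1 d1 h1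
      obtain ⟨k, g⟩ := cutH n1 n₂' (by omega) d1' p
      rw [h1]
      exact ⟨k + 1, LD.andL g⟩
  | @andR n₂' _ _ _ B1 B2 p1 p2 =>
    subst eΔ
    obtain ⟨k1, g1⟩ := cutH n1 n₂' (by omega) d1 p1
    obtain ⟨k2, g2⟩ := cutH n1 n₂' (by omega) d1 p2
    exact ⟨max k1 k2 + 1,
      LD.andR (g1.mono (le_max_left _ _)) (g2.mono (le_max_right _ _))⟩
  | @impL n₂' _ Γ₂ w₂ _ C₂ D₂ _ p1 p2 =>
    rcases cons_eq_cons' eΔ with ⟨h1, h2⟩ | ⟨Δ', h1, h2⟩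
    · injection h1 with hw hA'
      subst hw; subst hA'; subst h2
      have hC : C₂.size < (C₂.imp D₂).size := by simp [Formula.size]
      have hD : D₂.size < (C₂.imp D₂).size := by simp [Formula.size]
      have g1 := cutH n1 n₂' (by omega) d1 p1
      have e := LD.inv_impR n1 d1 rfl
      have g2 := cutS C₂ hC _ _ _ _ _ g1 ⟨n1, e⟩
      exact cutS D₂ hD _ _ _ _ _ g2 ⟨n₂', p2⟩
    · subst h2
      rw [Multiset.cons_swap] at p1 p2
      have d1' := LD.inv_impl n1 d1 h1
      rw [h1] at d1
      obtain ⟨ka, ga⟩ := cutH n1 n₂' (by omega) d1 p1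
      obtain ⟨kb, gb⟩ := cutH n1 n₂' (by omega) d1' p2
      rw [h1]
      exact ⟨max ka kb + 1,
        LD.impL (ga.mono (le_max_left _ _)) (gb.mono (le_max_right _ _))⟩
  | @impR n₂' _ _ _ B1 B2 p =>
    subst eΔ
    rw [Multiset.cons_swap] at p
    obtain ⟨k, g⟩ := cutH n1 n₂' (by omega) (d1.weak1G (u, B1)) p
    exact ⟨k + 1, LD.impR g⟩
  | @diaL n₂' _ Γ₂ w₂ t₀ _ y C₂ _ hf p =>
    rcases cons_eq_cons' eΔ with ⟨h1, h2⟩ | ⟨Δ', h1, h2⟩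
    · injection h1 with hw hA'
      subst hw; subst hA'; subst h2
      have hC : C₂.size < (Formula.dia y C₂).size := by simp [Formula.size]
      obtain ⟨huR, huw, huG, huu⟩ := freshIn_cons_destruct hf
      have q : ∀ t, LDeriv α 𝒜 ((w, y, t) ::ₘ R) ((t, C₂) ::ₘ Γ) u B := by
        intro t
        have h1r := LD.sub n₂' t₀ t p
        rw [subR_cons, subG_cons, subR_id huR, subG_id huG, subL_self,
          subL_ne (Ne.symm huw), subL_ne (Ne.symm huu)] at h1r
        exact ⟨n₂', h1r⟩
      exact diaLeft (cutS C₂ hC) n1 d1 rfl q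
    · subst h2
      obtain ⟨huR, hu1, huu⟩ := hf
      simp only [mem_lfLabels_cons, not_or] at hu1
      obtain ⟨huw₂, huw, huΔ'⟩ := hu1
      have d1' := LD.inv_dia n1 d1 h1 huR huΔ' huw huw₂
      rw [Multiset.cons_swap] at p
      obtain ⟨k, g⟩ := cutH n1 n₂' (by omega) d1' p
      rw [h1]
      refine ⟨k + 1, LD.diaL ⟨huR, ?_, huu⟩ g⟩
      simp only [mem_lfLabels_cons, not_or]
      exact ⟨huw₂, huΔ'⟩
  | @diaR n₂' R₀ _ w₂ t₀ y B₂ p =>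
    subst eΔ
    obtain ⟨k, g⟩ := cutH n1 n₂' (by omega) d1 p
    exact ⟨k + 1, LD.diaR g⟩
  | @boxR n₂' _ _ _ t₀ y B₂ hf p =>
    subst eΔ
    obtain ⟨huR, hu1, huu⟩ := hf
    simp only [mem_lfLabels_cons, not_or] at hu1
    obtain ⟨k, g⟩ := cutH n1 n₂' (by omega) (d1.weak1R (u, y, t₀)) p
    exact ⟨k + 1, LD.boxR ⟨huR, hu1.2, huu⟩ g⟩
  | @boxL n₂' R₀ Γ₂ w₂ t₀ _ y C₂ _ p =>
    rcases cons_eq_cons' eΔ with ⟨h1, h2⟩ | ⟨Δ', h1, h2⟩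
    · injection h1 with hw hA'
      subst hw; subst hA'; subst h2
      have hC : C₂.size < (Formula.box y C₂).size := by simp [Formula.size]
      have e := cutH n1 n₂' (by omega) (d1.weak1G (t₀, C₂)) p
      obtain ⟨t, k1, -, k3, -, k5⟩ := exists_fresh ((w, y, t₀) ::ₘ R₀) 0 Γ 0 [w]
      simp only [mem_relLabels_cons, not_or] at k1
      have d1' := LD.inv_boxR n1 d1 rfl
        (by simp only [mem_relLabels_cons, not_or]; exact ⟨k1.1, k1.2.1, k1.2.2⟩)
        k3 (k5 w (by simp))
      have d1'' := LD.sub n1 t t₀ d1'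
      rw [subR_cons, subR_cons, subL_self,
        subR_id (k1.2.2 : t ∉ relLabels R₀), subG_id k3,
        subL_ne (Ne.symm (k5 w (by simp))), subL_ne (Ne.symm k1.2.1)] at d1''
      have e2 := d1''.relCtr
      exact cutS C₂ hC _ _ _ _ _ e2 e
    · subst h2
      rw [ms_rot] at p
      rw [h1] at d1
      have d1w := d1.weak1G (t₀, C₂)
      rw [Multiset.cons_swap] at d1w
      obtain ⟨k, g⟩ := cutH n1 n₂' (by omega) d1w p
      rw [h1]
      exact ⟨k + 1, LD.boxL g⟩
  | @dx n₂' _ _ t₀ _ y _ w₂ hax hf p =>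
    subst eΔ
    obtain ⟨huR, hu1, huu⟩ := hf
    simp only [mem_lfLabels_cons, not_or] at hu1
    obtain ⟨k, g⟩ := cutH n1 n₂' (by omega) (d1.weak1R (w₂, y, t₀)) p
    exact ⟨k + 1, LD.dx w₂ hax ⟨huR, hu1.2, huu⟩ g⟩
  | @isx n₂' R₀ _ w₀ u₀ _ s y m _ hax hc p =>
    subst eΔ
    obtain ⟨k, g⟩ := cutH n1 n₂' (by omega) (d1.weak1R (w₀, y, u₀)) p
    exact ⟨k + 1, LD.isx hax hc g⟩
  | @cx n₂' R₀ _ w₂ u₂ _ y _ p =>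
    subst eΔ
    have d1w := d1.weak1R (u₂, α.conv y, w₂)
    rw [Multiset.cons_swap] at d1w
    obtain ⟨k, g⟩ := cutH n1 n₂' (by omega) d1w p
    exact ⟨k + 1, LD.cx g⟩

end CutElim











/-- **Cut-elimination**: the `(cut)` rule is admissible in `L_Σ(𝒜)`. -/
theorem cut_admissible (α : Alphabet) (𝒜 : Set (Ax α.Char))
    (R R' : Multiset (Rel α.Char)) (Γ Γ' : Multiset (LF α.Char)) (w u : ℕ)
    (A B : Formula α.Char)
    (h1 : LDeriv α 𝒜 R Γ w A) (h2 : LDeriv α 𝒜 R' ((w, A) ::ₘ Γ') u B) :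
    LDeriv α 𝒜 (R + R') (Γ + Γ') u B := by
  obtain ⟨n1, d1⟩ := h1
  obtain ⟨n2, d2⟩ := h2
  have d1w := LD.weak n1 d1 R' Γ'
  rw [add_comm R' R, add_comm Γ' Γ] at d1w
  have d2w := LD.weak n2 d2 R Γ
  rw [Multiset.add_cons] at d2w
  exact cutA A.size A le_rfl (n1 + n2) n1 n2 le_rfl d1w d2w

end IGL
end

section
/- Path replacement under grammar rules: suppose (y ⟶ s) and (ȳ ⟶ s̄) are production rules of the 𝒜-grammar g(𝒜), and let R₁ = R, wR_su, wR_yu and R₂ = R, wR_su (where wR_su abbreviates the chain of relational atoms along the string s, with fresh intermediate labels). If there exists a propagation path π(z,v) in PG(R₁) with s_π(z,v) ∈ L_{g(𝒜)}(x), then there exists a propagation path π'(z,v) in PG(R₂) with s_{π'}(z,v) ∈ L_{g(𝒜)}(x). -/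
namespace IGL

lemma ppath_append {α : Alphabet} {R : Multiset (Rel α.Char)} {w v u : ℕ}
    {s t : List α.Char} (h1 : PPath α R w v s) (h2 : PPath α R v u t) :
    PPath α R w u (s ++ t) := by
  induction h1 with
  | nil => exact h2
  | cons e _ ih => exact PPath.cons e (ih h2)

lemma pgedge_symm {α : Alphabet} {R : Multiset (Rel α.Char)} {a b : ℕ} {x : α.Char}
    (h : PGEdge α R a x b) : PGEdge α R b (α.conv x) a := by
  rcases h with h | h
  · exact Or.inr (by rwa [α.conv_conv])
  · exact Or.inl h

lemma ppath_rev {α : Alphabet} {R : Multiset (Rel α.Char)} {w u : ℕ}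
    {s : List α.Char} (h : PPath α R w u s) : PPath α R u w (convStr α.conv s) := by
  induction h with
  | nil => exact PPath.nil _
  | cons e _ ih =>
    simp only [convStr, List.map_cons, List.reverse_cons]
    exact ppath_append (by simpa [convStr] using ih)
      (PPath.cons (pgedge_symm e) (PPath.nil _))

lemma ppath_mono {α : Alphabet} {R R' : Multiset (Rel α.Char)} {w u : ℕ}
    {s : List α.Char} (hR : ∀ a ∈ R, a ∈ R') (h : PPath α R w u s) :
    PPath α R' w u s := by
  induction h with
  | nil => exact PPath.nil _
  | cons e _ ih =>
    refine PPath.cons ?_ ih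
    rcases e with h | h
    · exact Or.inl (hR _ h)
    · exact Or.inr (hR _ h)

lemma chain_ppath {α : Alphabet} {s : List α.Char} {w u : ℕ}
    {m : Multiset (Rel α.Char)} (h : Chain s w u m) : PPath α m w u s := by
  induction h with
  | nil => exact PPath.nil _
  | @cons x s' w' v' u' m' _ ih =>
    exact PPath.cons (Or.inl (Multiset.mem_cons_self _ _))
      (ppath_mono (fun a ha => Multiset.mem_cons_of_mem ha) ih)

lemma rtg_step_cons {C : Type} {g : Set (C × List C)} {a b : List C} (c : C)
    (h : Relation.ReflTransGen (Step g) a b) :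
    Relation.ReflTransGen (Step g) (c :: a) (c :: b) := by
  refine Relation.ReflTransGen.lift (fun l => c :: l) ?_ _ _ h
  rintro p q ⟨s₁, s₂, x, r, hg, rfl, rfl⟩
  exact ⟨c :: s₁, s₂, x, r, hg, rfl, rfl⟩

lemma rtg_step_append {C : Type} {g : Set (C × List C)} {a b : List C} (p : List C)
    (h : Relation.ReflTransGen (Step g) a b) :
    Relation.ReflTransGen (Step g) (p ++ a) (p ++ b) := by
  induction p with
  | nil => exact h
  | cons c p ih => exact rtg_step_cons c ih

/-- **Path replacement under grammar rules**: if `(y ⟶ s)` and `(ȳ ⟶ s̄)` are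
production rules of `g(𝒜)`, `R₁ = R, wR_su, wR_yu` and `R₂ = R, wR_su`, then
any propagation path `π(z,v)` in `PG(R₁)` whose string lies in `L_{g(𝒜)}(x)`
can be replaced by a propagation path `π'(z,v)` in `PG(R₂)` whose string lies
in `L_{g(𝒜)}(x)`. -/
theorem path_replacement (α : Alphabet) (𝒜 : Set (Ax α.Char))
    (y : α.Char) (s : List α.Char)
    (h1 : (y, s) ∈ Gram α 𝒜) (h2 : (α.conv y, convStr α.conv s) ∈ Gram α 𝒜)
    (R m : Multiset (Rel α.Char)) (w u : ℕ) (hc : Chain s w u m)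
    (z v : ℕ) (x : α.Char)
    (hpath : ∃ t, PPath α ((w, y, u) ::ₘ (m + R)) z v t ∧ t ∈ Lang (Gram α 𝒜) x) :
    ∃ t, PPath α (m + R) z v t ∧ t ∈ Lang (Gram α 𝒜) x := by
  obtain ⟨t, hp, ht⟩ := hpath
  suffices key : ∀ z v t, PPath α ((w, y, u) ::ₘ (m + R)) z v t →
      ∃ t', PPath α (m + R) z v t' ∧ Relation.ReflTransGen (Step (Gram α 𝒜)) t t' by
    obtain ⟨t', hp', hs⟩ := key z v t hp
    exact ⟨t', hp', Relation.ReflTransGen.trans ht hs⟩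
  intro z v t hp
  induction hp with
  | nil => exact ⟨[], PPath.nil _, Relation.ReflTransGen.refl⟩
  | @cons a b v' c t₀ e _ ih =>
    obtain ⟨t', hp', hs⟩ := ih
    have hsw : PPath α (m + R) w u s :=
      ppath_mono (fun r hr => Multiset.mem_add.2 (Or.inl hr)) (chain_ppath hc)
    rcases e with h | h
    · rcases Multiset.mem_cons.1 h with h | h
      · -- edge is (w, y, u) : a = w, c = y, b = u
        obtain ⟨ha, hcy, hb⟩ : a = w ∧ c = y ∧ b = u := by
          injection h with h1 h2; injection h2 with h3 h4; exact ⟨h1, h3, h4⟩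
        subst ha; subst hcy; subst hb
        exact ⟨s ++ t', ppath_append hsw hp',
          Relation.ReflTransGen.head ⟨[], t₀, _, s, h1, rfl, rfl⟩
            (rtg_step_append s hs)⟩
      · exact ⟨c :: t', PPath.cons (Or.inl h) hp', rtg_step_cons c hs⟩
    · rcases Multiset.mem_cons.1 h with h | h
      · -- converse edge: b = w, conv c = y, a = u, so c = conv y
        obtain ⟨hb, hcy, ha⟩ : b = w ∧ α.conv c = y ∧ a = u := by
          injection h with h1 h2; injection h2 with h3 h4; exact ⟨h1, h3, h4⟩
        have hc' : c = α.conv y := by rw [← hcy, α.conv_conv]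
        subst hb; subst ha; subst hc'
        exact ⟨convStr α.conv s ++ t', ppath_append (ppath_rev hsw) hp',
          Relation.ReflTransGen.head ⟨[], t₀, _, convStr α.conv s, h2, rfl, rfl⟩
            (rtg_step_append _ hs)⟩
      · exact ⟨c :: t', PPath.cons (Or.inr h) hp', rtg_step_cons c hs⟩

end IGL
end
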